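/- arXiv:2304.13801 — 7 statements merged into one kernel-verified Lean document; each statement's English description precedes it below -/
import Mathlib

section
/- Let q be a power of a prime p, and let d be a divisor of q-1 with d > 1. Suppose A, B ⊆ F_q are such that A + B ⊆ S_d ∪ {0} and the binomial coefficient C(|A| - 1 + (q-1)/d, (q-1)/d) is not divisible by p. Then |A| · |B| ≤ (q-1)/d + |A ∩ (-B)|, where -B = {-b : b ∈ B}. -/
open Pointwise Polynomial Finset

/-- Vandermonde system solution: coefficients `c` with prescribed power sums. -/
lemma vdm_solve {F : Type} [Field F] {m : ℕ} (hm : 0 < m) (e : Fin m → F)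
    (he : Function.Injective e) :
    ∃ c : Fin m → F, ∀ t : ℕ, t < m →
      (∑ i, c i * e i ^ t) = if t = m - 1 then 1 else 0 := by
  classical
  set M : Matrix (Fin m) (Fin m) F := fun j i => e i ^ (j : ℕ) with hM
  have hdet : M.det ≠ 0 := by
    have hMt : M = (Matrix.vandermonde e).transpose := by
      ext j i; simp [hM, Matrix.vandermonde]
    rw [hMt, Matrix.det_transpose, Matrix.det_vandermonde]
    refine Finset.prod_ne_zero_iff.mpr fun i _ => Finset.prod_ne_zero_iff.mpr fun j hj => ?_
    have hij : i ≠ j := by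
      intro h; subst h; simp [Finset.mem_Ioi] at hj
    exact sub_ne_zero.mpr fun h => hij (he h.symm)
  have hu : IsUnit M.det := isUnit_iff_ne_zero.mpr hdet
  set v : Fin m → F := Pi.single ⟨m - 1, by omega⟩ 1 with hv
  refine ⟨M⁻¹.mulVec v, fun t ht => ?_⟩
  have key : M.mulVec (M⁻¹.mulVec v) = v := by
    rw [Matrix.mulVec_mulVec, Matrix.mul_nonsing_inv _ hu, Matrix.one_mulVec]
  have h1 := congrFun key ⟨t, ht⟩
  have h2 : (M.mulVec (M⁻¹.mulVec v)) ⟨t, ht⟩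
      = ∑ i, (M⁻¹.mulVec v) i * e i ^ t := by
    simp [Matrix.mulVec, dotProduct, hM, mul_comm]
  rw [h2] at h1
  rw [h1, hv, Pi.single_apply]
  by_cases h : t = m - 1
  · simp [h, Fin.ext_iff]
  · simp [h, Fin.ext_iff, Ne.symm]

/-- Shifted power-sum identity. -/
lemma vdm_shift {F : Type} [Field F] {m : ℕ} (c e : Fin m → F)
    (h : ∀ t : ℕ, t < m → (∑ i, c i * e i ^ t) = if t = m - 1 then 1 else 0)
    (x : F) : ∀ t : ℕ, t < m →
      (∑ i, c i * (e i + x) ^ t) = if t = m - 1 then 1 else 0 := by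
  intro t ht
  calc ∑ i, c i * (e i + x) ^ t
      = ∑ i, ∑ u ∈ Finset.range (t + 1),
          (c i * e i ^ u) * (x ^ (t - u) * (t.choose u : F)) := by
        refine Finset.sum_congr rfl fun i _ => ?_
        rw [add_pow, Finset.mul_sum]
        exact Finset.sum_congr rfl fun u _ => by ring
    _ = ∑ u ∈ Finset.range (t + 1),
          (∑ i, c i * e i ^ u) * (x ^ (t - u) * (t.choose u : F)) := by
        rw [Finset.sum_comm]
        exact Finset.sum_congr rfl fun u _ => (Finset.sum_mul _ _ _).symm
    _ = ∑ u ∈ Finset.range (t + 1),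
          (if u = m - 1 then (1:F) else 0) * (x ^ (t - u) * (t.choose u : F)) := by
        refine Finset.sum_congr rfl fun u hu => ?_
        rw [h u (by simp at hu; omega)]
    _ = if t = m - 1 then 1 else 0 := by
        by_cases hc : t = m - 1
        · subst hc
          rw [Finset.sum_eq_single (m - 1)]
          · simp
          · intro u hu hne; simp [hne]
          · intro habs; simp at habs
        · rw [if_neg hc]
          refine Finset.sum_eq_zero fun u hu => ?_
          have : u ≠ m - 1 := by simp at hu; omega
          simp [this]

/-- Let `q = p^n` be a prime power and `d ∣ q-1` with `d > 1`.
If `A + B ⊆ S_d ∪ {0}` and `p` does not divide the binomial coefficient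
`C(|A| - 1 + (q-1)/d, (q-1)/d)`, then `|A|·|B| ≤ (q-1)/d + |A ∩ (-B)|`. -/
theorem stmt_0 (p n q : ℕ) (hp : p.Prime) (hn : 0 < n) (hq : q = p ^ n)
    (F : Type) [Field F] [Fintype F] [DecidableEq F] (hF : Fintype.card F = q)
    (d : ℕ) (hd : d ∣ q - 1) (hd1 : 1 < d)
    (A B : Finset F)
    (hAB : A + B ⊆ (Finset.image (fun x : Fˣ => ((x : F) ^ d)) Finset.univ) ∪ {0})
    (hbin : ¬ (p ∣ Nat.choose (A.card - 1 + (q - 1) / d) ((q - 1) / d))) :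
    A.card * B.card ≤ (q - 1) / d + (A ∩ (-B)).card := by
  classical
  set s := (q - 1) / d with hs
  set m := A.card with hmdef
  rcases Nat.eq_zero_or_pos m with hm | hm
  · rw [hm, zero_mul]; exact Nat.zero_le _
  have hq2 : 2 ≤ q := by
    rw [hq]
    exact Nat.one_lt_pow hn.ne' hp.one_lt
  have hds : d * s = q - 1 := Nat.mul_div_cancel' hd
  have hs1 : 1 ≤ s := by
    rcases Nat.eq_zero_or_pos s with h | h
    · rw [h, mul_zero] at hds; omega
    · exact h
  -- characteristic
  have hchar : CharP F p := by
    have h1 : CharP F (ringChar F) := ringChar.charP F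
    obtain ⟨n', hn'p, hcard⟩ := FiniteField.card F (ringChar F)
    have hq' : p ^ n = ringChar F ^ (n' : ℕ) := by rw [← hq, ← hF, hcard]
    have hdvd : p ∣ ringChar F ^ (n' : ℕ) := hq' ▸ dvd_pow_self p hn.ne'
    have h2 : p ∣ ringChar F := hp.dvd_of_dvd_pow hdvd
    have h3 : p = ringChar F := (Nat.prime_dvd_prime_iff_eq hp hn'p).mp h2
    rw [h3]; exact h1
  -- the s-th power of every nonzero element of A+B is 1
  have hpow : ∀ x : F, x ∈ A + B → x ≠ 0 → x ^ s = 1 := by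
    intro x hx hx0
    rcases Finset.mem_union.mp (hAB hx) with h | h
    · obtain ⟨u, -, hu⟩ := Finset.mem_image.mp h
      rw [← hu, ← pow_mul, hds, ← hF]
      exact FiniteField.pow_card_sub_one_eq_one _ (Units.ne_zero u)
    · exact absurd (Finset.mem_singleton.mp h) hx0
  -- enumeration of A
  set e : Fin m → F := fun i => ((A.equivFin.symm i : A) : F) with he
  have heA : ∀ i, e i ∈ A := fun i => (A.equivFin.symm i).2
  have hein : Function.Injective e := fun i j h =>
    A.equivFin.symm.injective (Subtype.ext h)
  obtain ⟨c, hc⟩ := vdm_solve hm e hein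
  have hcs := vdm_shift c e hc
  -- Stepanov polynomial
  set N := s + (m - 1) with hN
  set f : F[X] := ∑ i, Polynomial.C (c i) * (Polynomial.X + Polynomial.C (e i)) ^ N with hf
  set g : F[X] := f - 1 with hg
  have hfco : ∀ k, f.coeff k = (N.choose k : F) * ∑ i, c i * e i ^ (N - k) := by
    intro k
    rw [hf, Polynomial.finset_sum_coeff]
    simp only [Polynomial.coeff_C_mul, Polynomial.coeff_X_add_C_pow]
    rw [Finset.mul_sum]
    exact Finset.sum_congr rfl fun i _ => by ring
  have hgco : ∀ k, 0 < k → g.coeff k = (N.choose k : F) * ∑ i, c i * e i ^ (N - k) := by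
    intro k hk
    rw [hg, Polynomial.coeff_sub, hfco, Polynomial.coeff_one, if_neg (by omega), sub_zero]
  have hdeg : g.natDegree ≤ s := by
    rw [Polynomial.natDegree_le_iff_coeff_eq_zero]
    intro k hk
    rw [hgco k (by omega)]
    rcases le_or_gt k N with hkN | hkN
    · rw [hc (N - k) (by omega), if_neg (by omega), mul_zero]
    · rw [Nat.choose_eq_zero_of_lt hkN]; simp
  have hgs : g.coeff s = (N.choose s : F) := by
    rw [hgco s hs1]
    have h1 : N - s = m - 1 := by omega
    rw [h1, hc (m - 1) (by omega), if_pos rfl, mul_one]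
  have hchoose : (N.choose s : F) ≠ 0 := by
    rw [Ne, CharP.cast_eq_zero_iff F p]
    have h1 : N = m - 1 + s := by omega
    rw [h1]
    exact hbin
  have hg0 : g ≠ 0 := fun h => hchoose (by rw [← hgs, h, Polynomial.coeff_zero])
  -- root multiplicities
  have hmult : ∀ b ∈ B, (m - if -b ∈ A then 1 else 0) ≤ Polynomial.rootMultiplicity b g := by
    intro b hb
    set m' := m - if -b ∈ A then 1 else 0 with hm'
    have hm'm : m' ≤ m := Nat.sub_le _ _
    rw [Polynomial.le_rootMultiplicity_iff hg0]
    have hcomp : g.comp (Polynomial.X + Polynomial.C b)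
        = (∑ i, Polynomial.C (c i) * (Polynomial.X + Polynomial.C (e i + b)) ^ N) - 1 := by
      rw [hg, hf, Polynomial.sub_comp, Polynomial.one_comp, Polynomial.sum_comp]
      congr 1
      refine Finset.sum_congr rfl fun i _ => ?_
      rw [Polynomial.mul_comp, Polynomial.C_comp, Polynomial.pow_comp, Polynomial.add_comp,
        Polynomial.X_comp, Polynomial.C_comp, Polynomial.C_add]
      ring
    have hXdvd : Polynomial.X ^ m' ∣ g.comp (Polynomial.X + Polynomial.C b) := by
      rw [Polynomial.X_pow_dvd_iff]
      intro k hk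
      have hkm : k < m := lt_of_lt_of_le hk hm'm
      rw [hcomp, Polynomial.coeff_sub, Polynomial.finset_sum_coeff]
      simp only [Polynomial.coeff_C_mul, Polynomial.coeff_X_add_C_pow]
      have hstep : ∀ i : Fin m, (e i + b) ^ (N - k) = (e i + b) ^ (m - 1 - k) := by
        intro i
        by_cases h0 : e i + b = 0
        · have hbA : -b ∈ A := by
            have : e i = -b := eq_neg_of_add_eq_zero_left h0
            rw [← this]; exact heA i
          have hm'1 : m' = m - 1 := by rw [hm', if_pos hbA]
          rw [h0, zero_pow (by omega), zero_pow (by omega)]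
        · have hNk : N - k = s + (m - 1 - k) := by omega
          rw [hNk, pow_add, hpow (e i + b) (Finset.add_mem_add (heA i) hb) h0, one_mul]
      have e1 : ∑ i, c i * ((e i + b) ^ (N - k) * (N.choose k : F))
          = (N.choose k : F) * ∑ i, c i * (e i + b) ^ (m - 1 - k) := by
        rw [Finset.mul_sum]
        refine Finset.sum_congr rfl fun i _ => ?_
        rw [hstep i]; ring
      rw [e1, hcs b (m - 1 - k) (by omega)]
      rcases Nat.eq_zero_or_pos k with rfl | hk0
      · rw [if_pos (by omega)]
        simp [Polynomial.coeff_one]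
      · rw [if_neg (by omega)]
        simp [Polynomial.coeff_one, hk0.ne']
    obtain ⟨r, hr⟩ := hXdvd
    have hgid : (g.comp (Polynomial.X + Polynomial.C b)).comp
        (Polynomial.X - Polynomial.C b) = g := by
      rw [Polynomial.comp_assoc, Polynomial.add_comp, Polynomial.X_comp, Polynomial.C_comp,
        sub_add_cancel, Polynomial.comp_X]
    refine ⟨r.comp (Polynomial.X - Polynomial.C b), ?_⟩
    rw [← hgid, hr, Polynomial.mul_comp, Polynomial.pow_comp, Polynomial.X_comp]
  -- counting roots with multiplicity
  set M0 : Multiset F := ∑ b ∈ B, Multiset.replicate (m - if -b ∈ A then 1 else 0) b with hM0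
  have hM0le : M0 ≤ g.roots := by
    rw [Multiset.le_iff_count]
    intro a
    have hcount : M0.count a
        = ∑ b ∈ B, if b = a then (m - if -b ∈ A then 1 else 0) else 0 := by
      rw [hM0, Multiset.count_sum']
      exact Finset.sum_congr rfl fun b _ => Multiset.count_replicate _ _ _
    rw [hcount, Finset.sum_ite_eq']
    by_cases haB : a ∈ B
    · rw [if_pos haB, Polynomial.count_roots]
      exact hmult a haB
    · rw [if_neg haB]; exact Nat.zero_le _
  have hcard : Multiset.card M0 = ∑ b ∈ B, (m - if -b ∈ A then 1 else 0) := by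
    rw [hM0]
    simp [Multiset.card_replicate]
  have hsum_le : ∑ b ∈ B, (m - if -b ∈ A then 1 else 0) ≤ s := by
    calc ∑ b ∈ B, (m - if -b ∈ A then 1 else 0) = Multiset.card M0 := hcard.symm
      _ ≤ Multiset.card g.roots := Multiset.card_le_card hM0le
      _ ≤ g.natDegree := Polynomial.card_roots' g
      _ ≤ s := hdeg
  -- arithmetic wrap-up
  set T := ∑ b ∈ B, (if -b ∈ A then 1 else 0) with hT
  have hsplit : m * B.card = (∑ b ∈ B, (m - if -b ∈ A then 1 else 0)) + T := by
    rw [hT, ← Finset.sum_add_distrib]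
    have h1 : ∀ b ∈ B, (m - if -b ∈ A then 1 else 0) + (if -b ∈ A then 1 else 0) = m := by
      intro b _
      have : (if -b ∈ A then 1 else 0) ≤ m := by
        split <;> omega
      omega
    rw [Finset.sum_congr rfl h1, Finset.sum_const, smul_eq_mul, mul_comm]
  have hTle : T ≤ (A ∩ (-B)).card := by
    have h1 : T = (B.filter fun b => -b ∈ A).card := by
      rw [hT, Finset.card_filter]
    rw [h1]
    apply Finset.card_le_card_of_injOn (fun b => -b)
    · intro b hbf
      rw [Finset.mem_coe, Finset.mem_filter] at hbf
      exact Finset.mem_inter.mpr ⟨hbf.2, Finset.neg_mem_neg hbf.1⟩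
    · intro x _ y _ h
      exact neg_injective h
  calc A.card * B.card = (∑ b ∈ B, (m - if -b ∈ A then 1 else 0)) + T := hsplit
    _ ≤ s + T := Nat.add_le_add_right hsum_le T
    _ ≤ s + (A ∩ (-B)).card := Nat.add_le_add_left hTle s
end

section
/- Let q be a power of a prime p, and let d be a divisor of q-1 with d > 1 such that (q-1)/d ≤ 2p/3. If A, B ⊆ F_q satisfy A + B = S_d, then |A| · |B| = (q-1)/d (in particular all sums a + b with a ∈ A, b ∈ B are distinct). Moreover, if additionally (q-1)/d is a prime number, then there is no decomposition A + B = S_d with |A| ≥ 2 and |B| ≥ 2. -/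
open Pointwise

open Polynomial in
private lemma card_le_natDegree_of_roots {F : Type} [Field F] [DecidableEq F]
    {P : F[X]} (hP : P ≠ 0) {s : Finset F} (h : ∀ x ∈ s, P.eval x = 0) :
    s.card ≤ P.natDegree := by
  have hsub : s ⊆ P.roots.toFinset := fun x hx =>
    Multiset.mem_toFinset.mpr ((Polynomial.mem_roots hP).mpr (h x hx))
  calc s.card ≤ P.roots.toFinset.card := Finset.card_le_card hsub
    _ ≤ Multiset.card P.roots := Multiset.toFinset_card_le _
    _ ≤ P.natDegree := Polynomial.card_roots' P

open Polynomial in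
private lemma stepanov_core {F : Type} [Field F] (p : ℕ) [CharP F p] (hp : p.Prime)
    (N : ℕ) (hN : 1 ≤ N) (A B : Finset F) (hB : 0 < B.card)
    (hsum : ∀ a ∈ A, ∀ b ∈ B, (a + b) ^ N = 1)
    (hlt : N + B.card ≤ p) :
    A.card * B.card ≤ N := by
  classical
  set l := B.card with hlB
  have hl : 1 ≤ l := hB
  set M := N + l - 1 with hM
  have hMeq : M = N + (l - 1) := by omega
  let e := B.equivFin.symm
  let b : Fin l → F := fun i => ((e i : F))
  have hbinj : Function.Injective b := by
    intro i j hij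
    exact e.injective (Subtype.ext hij)
  have hbmem : ∀ i, b i ∈ B := fun i => (e i).2
  let V : Matrix (Fin l) (Fin l) F := (Matrix.vandermonde b).transpose
  have hdet : IsUnit V.det := by
    rw [Matrix.det_transpose]
    exact (Matrix.det_vandermonde_ne_zero_iff.mpr hbinj).isUnit
  have hl1 : l - 1 < l := by omega
  let lst : Fin l := ⟨l - 1, hl1⟩
  let lam : Fin l → F := V⁻¹.mulVec (Pi.single lst 1)
  have hVlam : V.mulVec lam = Pi.single lst 1 := by
    rw [Matrix.mulVec_mulVec, Matrix.mul_nonsing_inv _ hdet, Matrix.one_mulVec]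
  have hlamsum : ∀ r : ℕ, r ≤ l - 1 → (∑ i, lam i * b i ^ r) = if r = l - 1 then 1 else 0 := by
    intro r hr
    have h2 := congrFun hVlam ⟨r, by omega⟩
    simp only [Matrix.mulVec, dotProduct, V, Matrix.transpose_apply,
      Matrix.vandermonde_apply, Pi.single_apply] at h2
    rw [show (∑ i, lam i * b i ^ r) = ∑ i, b i ^ r * lam i from
      Finset.sum_congr rfl (fun i _ => mul_comm _ _), h2]
    have : ((⟨r, by omega⟩ : Fin l) = lst) ↔ r = l - 1 := by
      constructor
      · intro h; exact congrArg Fin.val h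
      · intro h; exact Fin.ext h
    simp [this]
  have hsum' : ∀ a ∈ A, ∀ i, (a + b i) ^ N = 1 := fun a ha i => hsum a ha (b i) (hbmem i)
  clear_value lam
  clear hVlam hdet
  -- the Stepanov polynomial
  set g : F[X] := ∑ i, C (lam i) * (X + C (b i)) ^ M with hg
  set h : F[X] := g - 1 with hh
  have hgcoeff : ∀ q : ℕ, g.coeff q = (M.choose q : F) * ∑ i, lam i * b i ^ (M - q) := by
    intro q
    rw [hg, finset_sum_coeff, Finset.mul_sum]
    refine Finset.sum_congr rfl fun i _ => ?_
    rw [coeff_C_mul, coeff_X_add_C_pow]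
    ring
  have hdeg : h.natDegree ≤ N := by
    rw [natDegree_le_iff_coeff_eq_zero]
    intro q hq
    rw [hh, coeff_sub, coeff_one, if_neg (by omega : ¬ q = 0), sub_zero, hgcoeff]
    rcases le_or_gt q M with hqM | hqM
    · rw [hlamsum (M - q) (by omega), if_neg (by omega), mul_zero]
    · rw [Nat.choose_eq_zero_of_lt hqM]
      simp
  have hchoose : ¬ (p ∣ M.choose N) := by
    intro hdvd
    have h1 : M.choose N ∣ M.factorial := by
      refine Dvd.intro (N.factorial * (M - N).factorial) ?_
      rw [← Nat.choose_mul_factorial_mul_factorial (by omega : N ≤ M), mul_assoc]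
    have := (Nat.Prime.dvd_factorial hp).mp (hdvd.trans h1)
    omega
  have hcoeffN : h.coeff N = (M.choose N : F) := by
    rw [hh, coeff_sub, coeff_one, if_neg (by omega : ¬ N = 0), sub_zero, hgcoeff,
      show M - N = l - 1 by omega, hlamsum (l-1) le_rfl, if_pos rfl, mul_one]
  have hne : h ≠ 0 := by
    intro h0
    rw [h0, coeff_zero] at hcoeffN
    exact (fun hc => hchoose ((CharP.cast_eq_zero_iff F p _).mp hc)) hcoeffN.symm
  have htaylor : ∀ a ∈ A, ∀ j, j < l → ((taylor a) h).coeff j = 0 := by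
    intro a ha j hj
    have hcomp : ∀ c : F, (taylor a) ((X + C c) ^ M) = (X + C (a + c)) ^ M := by
      intro c
      rw [taylor_apply, pow_comp, add_comp, X_comp, C_comp, add_assoc, ← C_add]
    have htg : (taylor a) g = ∑ i, C (lam i) * (X + C (a + b i)) ^ M := by
      rw [hg, map_sum]
      refine Finset.sum_congr rfl fun i _ => ?_
      rw [show C (lam i) * (X + C (b i)) ^ M = lam i • ((X + C (b i)) ^ M) from (smul_eq_C_mul _).symm,
        LinearMap.map_smul, hcomp, smul_eq_C_mul]
    have hSe : ∀ e : ℕ, e ≤ l - 1 → (∑ i, lam i * (a + b i) ^ e) = if e = l - 1 then 1 else 0 := by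
      intro e he
      have expand : ∀ i, (a + b i) ^ e = ∑ r ∈ Finset.range (e+1), b i ^ r * a ^ (e - r) * (e.choose r : F) := by
        intro i
        rw [add_comm a (b i), add_pow]
      calc (∑ i, lam i * (a + b i) ^ e)
          = ∑ r ∈ Finset.range (e+1), (∑ i, lam i * b i ^ r) * (a ^ (e - r) * (e.choose r : F)) := by
            simp_rw [expand, Finset.mul_sum, Finset.sum_mul]
            rw [Finset.sum_comm]
            exact Finset.sum_congr rfl fun r _ => Finset.sum_congr rfl fun i _ => by ring
        _ = if e = l - 1 then 1 else 0 := by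
            rcases eq_or_lt_of_le he with he' | he'
            · rw [if_pos he']
              rw [Finset.sum_eq_single e]
              · rw [hlamsum e (le_of_eq he'), if_pos he', Nat.sub_self, pow_zero, Nat.choose_self]
                norm_num
              · intro r hr hre
                rw [Finset.mem_range] at hr
                rw [hlamsum r (by omega), if_neg (by omega), zero_mul]
              · intro he2
                exact absurd (Finset.self_mem_range_succ e) he2
            · rw [if_neg (by omega)]
              refine Finset.sum_eq_zero fun r hr => ?_
              rw [Finset.mem_range] at hr
              rw [hlamsum r (by omega), if_neg (by omega), zero_mul]
    have hcj : ((taylor a) g).coeff j = (M.choose j : F) * ∑ i, lam i * (a + b i) ^ (l - 1 - j) := by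
      rw [htg, finset_sum_coeff, Finset.mul_sum]
      refine Finset.sum_congr rfl fun i _ => ?_
      rw [coeff_C_mul, coeff_X_add_C_pow,
        show M - j = N + (l - 1 - j) by omega, pow_add, hsum' a ha i, one_mul]
      ring
    rw [hh, map_sub, coeff_sub, taylor_one, coeff_C, hcj]
    rcases Nat.eq_zero_or_pos j with rfl | hj0
    · simp only [Nat.sub_zero]
      rw [hSe (l-1) le_rfl, if_pos rfl, mul_one, Nat.choose_zero_right]
      norm_num
    · rw [hSe (l - 1 - j) (by omega), if_neg (by omega), mul_zero, if_neg (by omega), sub_zero]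
  have hdvd : ∀ a ∈ A, (X - C a) ^ l ∣ h := by
    intro a ha
    obtain ⟨u, hu⟩ := (X_pow_dvd_iff).mpr (fun dd hdd => htaylor a ha dd hdd)
    have hcomp : ((taylor a) h).comp (X - C a) = h := by
      rw [taylor_apply, comp_assoc]
      simp
    refine ⟨u.comp (X - C a), ?_⟩
    rw [← hcomp, hu, mul_comp, pow_comp, X_comp]
  have hprod : (∏ a ∈ A, (X - C a) ^ l) ∣ h := by
    refine Finset.prod_dvd_of_coprime ?_ (fun a ha => hdvd a ha)
    intro x hx y hy hxy
    exact (Polynomial.pairwise_coprime_X_sub_C (Function.injective_id) hxy).pow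
  have hdegprod : (∏ a ∈ A, (X - C a) ^ l).natDegree = A.card * l := by
    rw [natDegree_prod _ _ (fun a _ => pow_ne_zero _ (X_sub_C_ne_zero a))]
    simp [natDegree_pow, natDegree_X_sub_C, mul_comm]
  calc A.card * l = (∏ a ∈ A, (X - C a) ^ l).natDegree := hdegprod.symm
    _ ≤ h.natDegree := Polynomial.natDegree_le_of_dvd hprod hne
    _ ≤ N := hdeg

private lemma two_two_case {F : Type} [Field F] (p : ℕ) [CharP F p] (hp : p.Prime)
    (hodd : 3 ≤ p) (A B : Finset F) (hA : A.card = 2) (hB : B.card = 2)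
    (hsum : ∀ a ∈ A, ∀ b ∈ B, (a + b) ^ 2 = 1) : False := by
  classical
  obtain ⟨a, a', haa, rfl⟩ := Finset.card_eq_two.mp hA
  obtain ⟨b, b', hbb, rfl⟩ := Finset.card_eq_two.mp hB
  have h2 : (2 : F) ≠ 0 := by
    intro hcast
    have : (p : ℕ) ∣ 2 := by
      have := (CharP.cast_eq_zero_iff F p 2).mp (by exact_mod_cast hcast)
      exact this
    have := Nat.le_of_dvd (by norm_num) this
    omega
  have key : ∀ x ∈ ({a, a'} : Finset F), 2 * x + (b + b') = 0 := by
    intro x hx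
    have h1 := hsum x hx b (Finset.mem_insert_self _ _)
    have h1' := hsum x hx b' (Finset.mem_insert_of_mem (Finset.mem_singleton_self _))
    have hfac : (b - b') * (2 * x + (b + b')) = 0 := by linear_combination h1 - h1'
    rcases mul_eq_zero.mp hfac with hz | hz
    · exact absurd (sub_eq_zero.mp hz) hbb
    · exact hz
  have ha1 := key a (Finset.mem_insert_self _ _)
  have ha2 := key a' (Finset.mem_insert_of_mem (Finset.mem_singleton_self _))
  have : 2 * a = 2 * a' := by linear_combination ha1 - ha2
  exact haa (mul_left_cancel₀ h2 this)

private lemma count_aux {F : Type} [Field F] [DecidableEq F] (p : ℕ) [CharP F p] (hp : p.Prime)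
    (N : ℕ) (hN : 1 ≤ N) (A B : Finset F)
    (hsum : ∀ a ∈ A, ∀ b ∈ B, (a + b) ^ N = 1)
    (h3 : 3 * N ≤ 2 * p) (hlk : B.card ≤ A.card)
    (hA : 0 < A.card) (hB : 0 < B.card) :
    A.card * B.card ≤ N := by
  classical
  by_contra hc
  push_neg at hc
  set k := A.card with hk
  set l := B.card with hl
  -- k ≤ N
  have hkN : k ≤ N := by
    obtain ⟨b0, hb0⟩ := Finset.card_pos.mp hB
    have hPdeg : ((Polynomial.X + Polynomial.C b0) ^ N - 1 : Polynomial F).natDegree = N := by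
      rw [← Polynomial.C_1, Polynomial.natDegree_sub_C, Polynomial.natDegree_pow,
        Polynomial.natDegree_X_add_C, mul_one]
    have hPne : ((Polynomial.X + Polynomial.C b0) ^ N - 1 : Polynomial F) ≠ 0 := by
      intro h0
      rw [h0, Polynomial.natDegree_zero] at hPdeg
      omega
    have := card_le_natDegree_of_roots hPne (s := A) (fun x hx => by
      simp [Polynomial.eval_sub, Polynomial.eval_pow, hsum x hx b0 hb0])
    omega
  -- find suitable subset size t
  have hcore : ∀ t : ℕ, 1 ≤ t → t ≤ l → N + t ≤ p → k * t ≤ N := by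
    intro t ht1 htl htp
    obtain ⟨B', hB'sub, hB'card⟩ := Finset.exists_subset_card_eq htl
    have := stepanov_core p hp N hN A B' (by omega)
      (fun a ha b hb => hsum a ha b (hB'sub hb)) (by omega)
    rwa [hB'card] at this
  rcases le_or_gt 3 k with hk3 | hk3
  · -- main case : t = (N+k)/k
    set t := (N + k) / k with htdef
    have hdm := Nat.div_add_mod (N + k) k
    have hmlt : (N + k) % k < k := Nat.mod_lt _ (by omega)
    have htk : N < k * t := by
      have : k * t + (N + k) % k = N + k := hdm
      nlinarith [this, hmlt]
    have ht1 : 1 ≤ t := by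
      rw [htdef, Nat.one_le_div_iff (by omega)]
      omega
    have htl : t ≤ l := by
      rw [htdef, Nat.div_le_iff_le_mul_add_pred (by omega : 0 < k)]
      have e1 : k - 1 + 1 = k := by omega
      have hc' : N + 1 ≤ k * l := hc
      linarith [hc', e1]
    have htp : N + t ≤ p := by
      have h1 : t = N / k + 1 := by rw [htdef, Nat.add_div_right _ (by omega)]
      have h2 : N / k ≤ N / 3 := Nat.div_le_div_left hk3 (by norm_num)
      omega
    have := hcore t ht1 htl htp
    omega
  · -- small case : k ≤ 2, hence l ≤ 2, N ≤ 3
    have hl2 : l ≤ 2 := by omega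
    have hk2 : k ≤ 2 := by omega
    have hkl4 : k * l ≤ 4 := Nat.mul_le_mul hk2 hl2
    have hNlt : N < k * l := hc
    rcases (by omega : k = 1 ∨ k = 2) with hk' | hk' <;>
      rcases (by omega : l = 1 ∨ l = 2) with hl' | hl' <;>
      rw [hk', hl'] at hNlt
    · omega
    · omega
    · -- k = 2, l = 1 : N = 1
      have := hcore 1 le_rfl (by omega) (by have := hp.two_le; omega)
      omega
    · -- k = 2, l = 2 : N ≤ 3
      rcases (by omega : N = 1 ∨ N = 2 ∨ N = 3) with hN' | hN' | hN'
      · have := hcore 1 le_rfl (by omega) (by have := hp.two_le; omega)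
        omega
      · exact absurd (two_two_case p hp (by omega) A B (by omega) (by omega)
          (fun a ha b hb => by have := hsum a ha b hb; rwa [hN'] at this)) (fun h => h)
      · have := hcore 2 (by omega) (by omega) (by omega)
        omega

private lemma count_main {F : Type} [Field F] [DecidableEq F] (p : ℕ) [CharP F p] (hp : p.Prime)
    (N : ℕ) (hN : 1 ≤ N) (A B : Finset F)
    (hsum : ∀ a ∈ A, ∀ b ∈ B, (a + b) ^ N = 1)
    (h3 : 3 * N ≤ 2 * p) (hA : 0 < A.card) (hB : 0 < B.card) :
    A.card * B.card ≤ N := by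
  rcases le_total B.card A.card with h | h
  · exact count_aux p hp N hN A B hsum h3 h hA hB
  · rw [mul_comm]
    exact count_aux p hp N hN B A
      (fun b hb a ha => by rw [add_comm]; exact hsum a ha b hb) h3 h hB hA

private lemma card_image_pow_units {F : Type} [Field F] [Fintype F] [DecidableEq F]
    {q d m : ℕ} (hq : Fintype.card F = q) (hdm : d * m = q - 1) (hd : 0 < d) (hm : 0 < m) :
    (Finset.image (fun x : Fˣ => ((x : F) ^ d)) Finset.univ).card = m := by
  classical
  set S := Finset.image (fun x : Fˣ => ((x : F) ^ d)) Finset.univ with hS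
  have hq2 : 2 ≤ q := by
    have := Fintype.one_lt_card (α := F)
    omega
  have hpow : ∀ y ∈ S, y ^ m = 1 := by
    intro y hy
    rw [hS, Finset.mem_image] at hy
    obtain ⟨x, _, rfl⟩ := hy
    rw [← pow_mul, hdm, ← hq]
    exact FiniteField.pow_card_sub_one_eq_one _ (Units.ne_zero x)
  have hup : S.card ≤ m := by
    have hPdeg : ((Polynomial.X : Polynomial F) ^ m - Polynomial.C 1).natDegree = m :=
      Polynomial.natDegree_X_pow_sub_C
    have hPne : ((Polynomial.X : Polynomial F) ^ m - Polynomial.C 1) ≠ 0 :=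
      Polynomial.X_pow_sub_C_ne_zero hm 1
    have := card_le_natDegree_of_roots hPne (s := S) (fun y hy => by
      simp [Polynomial.eval_sub, Polynomial.eval_pow, hpow y hy])
    omega
  have hdown : q - 1 ≤ d * S.card := by
    have hfib : ∀ y ∈ Finset.univ.image (fun x : Fˣ => ((x : F) ^ d)),
        (Finset.univ.filter (fun x : Fˣ => ((x : F) ^ d) = y)).card ≤ d := by
      intro y hy
      set T := Finset.univ.filter (fun x : Fˣ => ((x : F) ^ d) = y) with hT
      have hinj : (T.image (fun x : Fˣ => (x : F))).card = T.card :=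
        Finset.card_image_of_injective _ Units.val_injective
      have hPdeg : ((Polynomial.X : Polynomial F) ^ d - Polynomial.C y).natDegree = d :=
        Polynomial.natDegree_X_pow_sub_C
      have hPne : ((Polynomial.X : Polynomial F) ^ d - Polynomial.C y) ≠ 0 :=
        Polynomial.X_pow_sub_C_ne_zero hd y
      have hroots := card_le_natDegree_of_roots hPne (s := T.image (fun x : Fˣ => (x : F)))
        (fun z hz => by
          rw [Finset.mem_image] at hz
          obtain ⟨x, hx, rfl⟩ := hz
          rw [hT, Finset.mem_filter] at hx
          simp [Polynomial.eval_sub, Polynomial.eval_pow, hx.2])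
      omega
    have := Finset.card_le_mul_card_image (f := fun x : Fˣ => ((x : F) ^ d))
      (Finset.univ : Finset Fˣ) d hfib
    rw [← hS] at this
    have hcard : (Finset.univ : Finset Fˣ).card = q - 1 := by
      rw [Finset.card_univ, Fintype.card_units, hq]
    omega
  have : m ≤ S.card := by
    by_contra hsm
    push_neg at hsm
    have : d * S.card < d * m := (Nat.mul_lt_mul_left hd).mpr hsm
    omega
  omega

/-- Let `q = p^n` be a prime power and `d ∣ q-1` with `d > 1` such that
`(q-1)/d ≤ 2p/3`. If `A + B = S_d` then `|A|·|B| = (q-1)/d`; moreover, if `(q-1)/d` is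
prime, then there is no such decomposition with `|A|, |B| ≥ 2`. -/
theorem stmt_1 (p n q : ℕ) (hp : p.Prime) (hn : 0 < n) (hq : q = p ^ n)
    (F : Type) [Field F] [Fintype F] [DecidableEq F] (hF : Fintype.card F = q)
    (d : ℕ) (hd : d ∣ q - 1) (hd1 : 1 < d)
    (hsmall : 3 * ((q - 1) / d) ≤ 2 * p) :
    (∀ A B : Finset F,
      A + B = Finset.image (fun x : Fˣ => ((x : F) ^ d)) Finset.univ →
      A.card * B.card = (q - 1) / d) ∧
    (Nat.Prime ((q - 1) / d) →
      ∀ A B : Finset F,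
        A + B = Finset.image (fun x : Fˣ => ((x : F) ^ d)) Finset.univ →
        ¬ (2 ≤ A.card ∧ 2 ≤ B.card)) := by
  classical
  -- characteristic
  obtain ⟨c, hcinst⟩ := CharP.exists F
  haveI := hcinst
  obtain ⟨m', hcprime, hccard⟩ := FiniteField.card F c
  have hpc : p = c := by
    have h1 : p ∣ c ^ (m' : ℕ) := by
      rw [← hccard, hF, hq]
      exact dvd_pow_self p (by omega)
    exact (Nat.prime_dvd_prime_iff_eq hp hcprime).mp (hp.dvd_of_dvd_pow h1)
  subst hpc
  have hq2 : 2 ≤ q := by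
    have := Nat.one_lt_pow (by omega : n ≠ 0) hp.one_lt
    omega
  set m := (q - 1) / d with hm
  have hdm : d * m = q - 1 := Nat.mul_div_cancel' hd
  have hm1 : 1 ≤ m := by
    rcases Nat.eq_zero_or_pos m with h0 | h1
    · rw [h0, mul_zero] at hdm
      omega
    · exact h1
  have hScard : (Finset.image (fun x : Fˣ => ((x : F) ^ d)) Finset.univ).card = m :=
    card_image_pow_units hF hdm (by omega) hm1
  have part1 : ∀ A B : Finset F,
      A + B = Finset.image (fun x : Fˣ => ((x : F) ^ d)) Finset.univ →
      A.card * B.card = m := by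
    intro A B hAB
    have hSne : (Finset.image (fun x : Fˣ => ((x : F) ^ d)) Finset.univ).Nonempty := by
      rw [← Finset.card_pos, hScard]; omega
    obtain ⟨y, hy⟩ := hSne
    rw [← hAB] at hy
    obtain ⟨a0, ha0, b0, hb0, rfl⟩ := Finset.mem_add.mp hy
    have hA : 0 < A.card := Finset.card_pos.mpr ⟨a0, ha0⟩
    have hB : 0 < B.card := Finset.card_pos.mpr ⟨b0, hb0⟩
    have hsum : ∀ a ∈ A, ∀ b ∈ B, (a + b) ^ m = 1 := by
      intro a ha b hb
      have hmem : a + b ∈ A + B := Finset.add_mem_add ha hb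
      rw [hAB, Finset.mem_image] at hmem
      obtain ⟨x, _, hx⟩ := hmem
      rw [← hx, ← pow_mul, hdm, ← hF]
      exact FiniteField.pow_card_sub_one_eq_one _ (Units.ne_zero x)
    have hup : A.card * B.card ≤ m :=
      count_main p hp m hm1 A B hsum hsmall hA hB
    have hlow : m ≤ A.card * B.card := by
      calc m = (A + B).card := by rw [hAB, hScard]
        _ ≤ A.card * B.card := Finset.card_add_le
    omega
  refine ⟨part1, ?_⟩
  intro hmprime A B hAB ⟨h2A, h2B⟩
  have h1 := part1 A B hAB
  have hdvdA : A.card ∣ m := ⟨B.card, h1.symm⟩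
  rcases hmprime.eq_one_or_self_of_dvd A.card hdvdA with hA1 | hAm
  · omega
  · have := hmprime.two_le
    nlinarith [h1, hAm]
end

section
/- Let q be a prime power and let d be a divisor of q-1 with d > 1. If A, B ⊆ F_q satisfy A + B ⊆ S_d, then |A| · |B| < q. -/
open Pointwise Finset Complex

section aux
variable {F : Type} [Field F] [Fintype F] [DecidableEq F]

lemma aux_inner (χ : MulChar F ℂ) (hχ : χ ≠ 1)
    (hnorm : ∀ x : F, x ≠ 0 → χ x * (starRingEnd ℂ) (χ x) = 1) (a a' : F) :
    ∑ b : F, χ (a + b) * (starRingEnd ℂ) (χ (a' + b)) =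
      if a = a' then (Fintype.card F : ℂ) - 1 else -1 := by
  rcases eq_or_ne a a' with rfl | hne
  · rw [if_pos rfl]
    have h1 : ∀ b : F, χ (a + b) * (starRingEnd ℂ) (χ (a + b))
        = 1 - if b = -a then (1:ℂ) else 0 := by
      intro b
      rcases eq_or_ne b (-a) with rfl | hb
      · simp [MulChar.map_zero]
      · rw [if_neg hb, hnorm _ (fun h => hb (by linear_combination h))]
        ring
    rw [Finset.sum_congr rfl (fun b _ => h1 b), Finset.sum_sub_distrib,
      Finset.sum_ite_eq' Finset.univ (-a) (fun _ => (1:ℂ))]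
    simp [Finset.card_univ]
  · rw [if_neg hne]
    set u := a - a' with hu_def
    have hu : u ≠ 0 := sub_ne_zero.mpr hne
    have h2 : (∑ c : F, χ (u + c) * (starRingEnd ℂ) (χ c))
        = ∑ b : F, χ (a + b) * (starRingEnd ℂ) (χ (a' + b)) := by
      refine Fintype.sum_equiv (Equiv.subRight a') _ _ (fun c => ?_)
      rw [Equiv.subRight_apply,
        show a + (c - a') = u + c from by rw [hu_def]; ring,
        show a' + (c - a') = c from by ring]
    rw [← h2]
    have h3 : (∑ c ∈ Finset.univ.erase (0 : F), χ (u + c) * (starRingEnd ℂ) (χ c))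
        = ∑ c : F, χ (u + c) * (starRingEnd ℂ) (χ c) := by
      rw [Finset.sum_erase_eq_sub (Finset.mem_univ (0 : F))]
      simp [MulChar.map_zero]
    rw [← h3]
    have h4 : ∀ c ∈ Finset.univ.erase (0 : F),
        χ (u + c) * (starRingEnd ℂ) (χ c) = χ (u * c⁻¹ + 1) := by
      intro c hc
      have hc0 : c ≠ 0 := Finset.ne_of_mem_erase hc
      have hχc : χ c ≠ 0 := by
        intro h
        have := hnorm c hc0
        rw [h] at this; simp at this
      have hinv : χ c⁻¹ = (starRingEnd ℂ) (χ c) := by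
        have e1 : χ c⁻¹ * χ c = 1 := by
          rw [← map_mul, inv_mul_cancel₀ hc0, χ.map_one]
        have e2 : (starRingEnd ℂ) (χ c) * χ c = 1 := by
          rw [mul_comm]; exact hnorm c hc0
        exact mul_right_cancel₀ hχc (e1.trans e2.symm)
      rw [← hinv, ← map_mul]
      congr 1
      field_simp
    rw [Finset.sum_congr rfl h4]
    have h5 : ∑ c ∈ Finset.univ.erase (0 : F), χ (u * c⁻¹ + 1)
        = ∑ t ∈ Finset.univ.erase (1 : F), χ t := by
      refine Finset.sum_bij' (fun c _ => u * c⁻¹ + 1) (fun t _ => u * (t - 1)⁻¹) ?_ ?_ ?_ ?_ ?_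
      · intro c hc
        have hc0 : c ≠ 0 := Finset.ne_of_mem_erase hc
        refine Finset.mem_erase.mpr ⟨?_, Finset.mem_univ _⟩
        intro h
        have : u * c⁻¹ = 0 := by linear_combination h
        rcases mul_eq_zero.mp this with h' | h'
        · exact hu h'
        · exact hc0 (inv_eq_zero.mp h')
      · intro t ht
        have ht1 : t ≠ 1 := Finset.ne_of_mem_erase ht
        refine Finset.mem_erase.mpr ⟨?_, Finset.mem_univ _⟩
        intro h
        rcases mul_eq_zero.mp h with h' | h'
        · exact hu h'
        · exact ht1 (by rw [← sub_eq_zero]; exact inv_eq_zero.mp h')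
      · intro c hc
        have hc0 : c ≠ 0 := Finset.ne_of_mem_erase hc
        field_simp
        rw [add_sub_cancel_right, div_self hu]
      · intro t ht
        have ht1 : t ≠ 1 := Finset.ne_of_mem_erase ht
        have : t - 1 ≠ 0 := sub_ne_zero.mpr ht1
        field_simp
        ring
      · intro c hc; rfl
    rw [h5, Finset.sum_erase_eq_sub (Finset.mem_univ 1),
      MulChar.sum_eq_zero_of_ne_one hχ, χ.map_one]
    ring

end aux

/-- Let `q = p^n` be a prime power and `d ∣ q - 1` with `d > 1`.
If `A + B ⊆ S_d`, then `|A|·|B| < q`. -/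
theorem stmt_8 (p n q : ℕ) (hp : p.Prime) (hn : 0 < n) (hq : q = p ^ n)
    (F : Type) [Field F] [Fintype F] [DecidableEq F] (hF : Fintype.card F = q)
    (d : ℕ) (hd : d ∣ q - 1) (hd1 : 1 < d)
    (A B : Finset F)
    (hAB : A + B ⊆ Finset.image (fun x : Fˣ => ((x : F) ^ d)) Finset.univ) :
    A.card * B.card < q := by
  have hq0 : 0 < q := hq ▸ pow_pos hp.pos n
  rcases A.eq_empty_or_nonempty with rfl | hA
  · simpa using hq0
  rcases B.eq_empty_or_nonempty with rfl | hB
  · simpa using hq0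
  have hd0 : d ≠ 0 := by omega
  obtain ⟨χ, hχd⟩ := MulChar.exists_mulChar_orderOf F (R := ℂ)
    (by rw [hF]; exact hd) (Complex.isPrimitiveRoot_exp d hd0)
  have hχ1 : χ ≠ 1 := by
    intro h; rw [h, orderOf_one] at hχd; omega
  have hpow : ∀ x : Fˣ, χ (x : F) ^ d = 1 := by
    intro x
    have h1 : χ ^ d = 1 := by rw [← hχd]; exact pow_orderOf_eq_one χ
    calc χ (x:F) ^ d = (χ ^ d) (x:F) := (MulChar.pow_apply_coe χ d x).symm
      _ = (1 : MulChar F ℂ) (x:F) := by rw [h1]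
      _ = 1 := MulChar.one_apply_coe x
  have hnorm : ∀ x : F, x ≠ 0 → χ x * (starRingEnd ℂ) (χ x) = 1 := by
    intro x hx
    have h1 : χ x ^ d = 1 := by
      have := hpow hx.isUnit.unit; rwa [IsUnit.unit_spec] at this
    have h2 : ‖χ x‖ = 1 := Complex.norm_eq_one_of_pow_eq_one h1 hd0
    rw [Complex.mul_conj, Complex.normSq_eq_norm_sq, h2]
    norm_num
  have hone : ∀ a ∈ A, ∀ b ∈ B, χ (a + b) = 1 := by
    intro a ha b hb
    obtain ⟨x, -, hx⟩ := Finset.mem_image.mp (hAB (Finset.add_mem_add ha hb))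
    rw [← hx, map_pow]
    exact hpow x
  set f : F → ℂ := fun b => ∑ a ∈ A, χ (a + b) with hf
  have hT : ∑ b ∈ B, f b = ((A.card : ℂ) * B.card) := by
    rw [hf]
    calc ∑ b ∈ B, ∑ a ∈ A, χ (a + b)
        = ∑ b ∈ B, ∑ a ∈ A, (1:ℂ) :=
          Finset.sum_congr rfl (fun b hb => Finset.sum_congr rfl
            (fun a ha => hone a ha b hb))
      _ = (B.card : ℂ) * A.card := by simp [mul_comm]
      _ = (A.card : ℂ) * B.card := by ring
  have hG : ∑ b : F, (Complex.normSq (f b) : ℂ)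
      = (A.card : ℂ) * q - (A.card : ℂ)^2 := by
    have e1 : ∀ b : F, (Complex.normSq (f b) : ℂ)
        = ∑ a ∈ A, ∑ a' ∈ A, χ (a + b) * (starRingEnd ℂ) (χ (a' + b)) := by
      intro b
      rw [← Complex.mul_conj, hf]
      simp only [map_sum]
      rw [Finset.sum_mul_sum]
    rw [Finset.sum_congr rfl (fun b _ => e1 b)]
    rw [Finset.sum_comm]
    have e2 : ∀ a ∈ A, (∑ a' ∈ A, ∑ b : F, χ (a + b) * (starRingEnd ℂ) (χ (a' + b)))
        = (A.card : ℂ) * (-1) + ((q : ℂ) - 1 - (-1)) := by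
      intro a ha
      have e3 : ∀ a' ∈ A, (∑ b : F, χ (a + b) * (starRingEnd ℂ) (χ (a' + b)))
          = (-1 : ℂ) + (if a' = a then ((q:ℂ) - 1 - (-1)) else 0) := by
        intro a' _
        rw [aux_inner χ hχ1 hnorm a a', hF]
        rcases eq_or_ne a a' with rfl | h
        · rw [if_pos rfl, if_pos rfl]; ring
        · rw [if_neg h, if_neg (Ne.symm h)]; ring
      rw [Finset.sum_congr rfl e3, Finset.sum_add_distrib, Finset.sum_const,
        Finset.sum_ite_eq' A a (fun _ => ((q:ℂ) - 1 - (-1))), if_pos ha]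
      simp [mul_comm]
    have e4 : ∀ a ∈ A, ∑ b : F, ∑ a' ∈ A, χ (a + b) * (starRingEnd ℂ) (χ (a' + b))
        = (A.card : ℂ) * (-1) + ((q : ℂ) - 1 - (-1)) := by
      intro a ha
      rw [Finset.sum_comm]
      exact e2 a ha
    rw [Finset.sum_congr rfl e4, Finset.sum_const]
    simp only [nsmul_eq_mul]
    ring
  -- real version
  have hGr : ∑ b : F, Complex.normSq (f b) = (A.card : ℝ) * q - (A.card : ℝ)^2 := by
    have := hG
    rw [show ((A.card : ℂ) * q - (A.card : ℂ)^2)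
        = (((A.card : ℝ) * q - (A.card : ℝ)^2 : ℝ) : ℂ) from by push_cast; ring,
      ← Complex.ofReal_sum] at this
    exact_mod_cast this
  have hnsq : ∀ b : F, Complex.normSq (f b) = ‖f b‖^2 := by
    intro b
    rw [Complex.normSq_eq_norm_sq]
  -- Cauchy-Schwarz chain
  have c1 : (A.card : ℝ) * B.card ≤ ∑ b ∈ B, ‖f b‖ := by
    calc (A.card : ℝ) * B.card = ‖∑ b ∈ B, f b‖ := by
          rw [hT, show ((A.card : ℂ) * B.card) = (((A.card : ℝ) * B.card : ℝ) : ℂ) from by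
            push_cast; ring, Complex.norm_real]
          exact (Real.norm_of_nonneg (by positivity)).symm
      _ ≤ ∑ b ∈ B, ‖f b‖ := norm_sum_le _ _
  have c2 : (∑ b ∈ B, ‖f b‖)^2 ≤ (B.card : ℝ) * ∑ b ∈ B, ‖f b‖^2 :=
    sq_sum_le_card_mul_sum_sq
  have c3 : ∑ b ∈ B, ‖f b‖^2 ≤ ∑ b : F, ‖f b‖^2 :=
    Finset.sum_le_sum_of_subset_of_nonneg (Finset.subset_univ B)
      (fun b _ _ => by positivity)
  have c4 : ∑ b : F, ‖f b‖^2 = (A.card : ℝ) * q - (A.card : ℝ)^2 := by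
    rw [← hGr]
    exact Finset.sum_congr rfl (fun b _ => (hnsq b).symm)
  have key : ((A.card : ℝ) * B.card)^2 ≤ (B.card : ℝ) * ((A.card : ℝ) * q - (A.card : ℝ)^2) := by
    calc ((A.card : ℝ) * B.card)^2 ≤ (∑ b ∈ B, ‖f b‖)^2 := by
          have h0 : (0:ℝ) ≤ (A.card : ℝ) * B.card := by positivity
          exact pow_le_pow_left₀ h0 c1 2
      _ ≤ (B.card : ℝ) * ∑ b ∈ B, ‖f b‖^2 := c2
      _ ≤ (B.card : ℝ) * ((A.card : ℝ) * q - (A.card : ℝ)^2) := by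
          rw [← c4]
          exact mul_le_mul_of_nonneg_left c3 (by positivity)
  have hA1 : (1:ℝ) ≤ A.card := by exact_mod_cast hA.card_pos
  have hB1 : (1:ℝ) ≤ B.card := by exact_mod_cast hB.card_pos
  have : (A.card : ℝ) * B.card < q := by nlinarith [mul_pos (lt_of_lt_of_le zero_lt_one hA1) (lt_of_lt_of_le zero_lt_one hB1)]
  exact_mod_cast this
end

section
/- Let q be a power of a prime p, and let d be a divisor of q-1 with d > 1. If A, B ⊆ F_q satisfy A + B ⊆ S_d and the binomial coefficient C(|A| - 1 + (q-1)/d, (q-1)/d) is not divisible by p, then |A| · |B| ≤ (q-1)/d. -/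
open Pointwise Polynomial Finset

section HansonPetridis

lemma exists_moments {F : Type} [Field F] [DecidableEq F] (A : Finset F) (hA : A.Nonempty) :
    ∃ c : {x // x ∈ A} → F, c ≠ 0 ∧ ∀ i < A.card - 1, ∑ a : {x // x ∈ A}, c a * (a : F) ^ i = 0 := by
  classical
  set k := A.card with hk
  let φ : ({x // x ∈ A} → F) →ₗ[F] (Fin (k - 1) → F) :=
    { toFun := fun c i => ∑ a : {x // x ∈ A}, c a * (a : F) ^ (i : ℕ)
      map_add' := by
        intro x y; funext i
        simp [add_mul, Finset.sum_add_distrib]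
      map_smul' := by
        intro r x; funext i
        simp [Finset.mul_sum, mul_assoc] }
  have hcard : Fintype.card {x // x ∈ A} = k := Fintype.card_coe A
  have hni : ¬ Function.Injective φ := by
    intro hinj
    have h1 := LinearMap.finrank_le_finrank_of_injective hinj
    rw [Module.finrank_pi, Module.finrank_pi] at h1
    rw [hcard, Fintype.card_fin] at h1
    have hk1 : 1 ≤ k := Finset.card_pos.2 hA
    omega
  rw [Function.not_injective_iff] at hni
  obtain ⟨x, y, hxy, hne⟩ := hni
  refine ⟨x - y, sub_ne_zero.2 hne, ?_⟩
  intro i hi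
  have := congrFun (show φ (x - y) = 0 by rw [map_sub, hxy, sub_self]) ⟨i, hi⟩
  simpa [φ, sub_mul, Finset.sum_sub_distrib] using this


lemma vandermonde_moments {F : Type} [Field F] [DecidableEq F] (A : Finset F)
    (c : {x // x ∈ A} → F)
    (h : ∀ i < A.card, ∑ a : {x // x ∈ A}, c a * (a : F) ^ i = 0) : c = 0 := by
  classical
  set k := A.card with hk
  let e : Fin k ≃ {x // x ∈ A} := A.equivFin.symm
  let v : Fin k → F := fun j => (e j : F)
  have hv : Function.Injective v := fun i j hij =>
    e.injective (Subtype.ext hij)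
  let M : Matrix (Fin k) (Fin k) F := (Matrix.vandermonde v).transpose
  have hdet : M.det ≠ 0 := by
    rw [Matrix.det_transpose, Matrix.det_vandermonde]
    apply Finset.prod_ne_zero_iff.2
    intro i _
    apply Finset.prod_ne_zero_iff.2
    intro j hj
    exact sub_ne_zero.2 fun hc => (Finset.mem_Ioi.1 hj).ne' (hv hc)
  have hmv : M.mulVec (fun j => c (e j)) = 0 := by
    funext i
    have := h (i : ℕ) i.isLt
    rw [← Equiv.sum_comp e (fun a => c a * (a : F) ^ (i : ℕ))] at this
    simpa [M, Matrix.mulVec, Matrix.vandermonde, dotProduct, v, mul_comm] using this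
  have hc0 : (fun j => c (e j)) = 0 := Matrix.eq_zero_of_mulVec_eq_zero hdet hmv
  funext a
  have := congrFun hc0 (e.symm a)
  simpa using this

lemma HP_main {F : Type} [Field F] [DecidableEq F] (m : ℕ) (hm : 1 ≤ m)
    (A B : Finset F) (hAne : A.Nonempty) (hBne : B.Nonempty)
    (hpow : ∀ a ∈ A, ∀ b ∈ B, (a + b) ^ m = 1)
    (hbin : ((A.card - 1 + m).choose m : F) ≠ 0) :
    A.card * B.card ≤ m := by
  classical
  set k := A.card with hk
  have hk1 : 1 ≤ k := Finset.card_pos.2 hAne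
  set N := m + (k - 1) with hN
  obtain ⟨c, hc0, hmom⟩ := exists_moments A hAne
  set γ : F := ∑ a : {x // x ∈ A}, c a * (a : F) ^ (k - 1) with hγ
  have hγ0 : γ ≠ 0 := by
    intro h0
    apply hc0
    apply vandermonde_moments
    intro i hi
    rcases lt_or_eq_of_le (Nat.lt_succ_iff.mp (by omega : i < (k-1) + 1)) with h | h
    · exact hmom i h
    · rw [h]; exact h0
  set P : F[X] := ∑ a : {x // x ∈ A}, C (c a) * (X + C (a : F)) ^ N with hP
  set Q : F[X] := P - C γ with hQ
  -- coefficients of P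
  have hPcoeff : ∀ t, P.coeff t =
      (N.choose t : F) * ∑ a : {x // x ∈ A}, c a * (a : F) ^ (N - t) := by
    intro t
    rw [hP, finset_sum_coeff]
    rw [Finset.mul_sum]
    congr 1
    funext a
    rw [coeff_C_mul, coeff_X_add_C_pow]
    ring
  -- coefficient at m
  have hQm : Q.coeff m = (N.choose m : F) * γ := by
    have h1 : N - m = k - 1 := by omega
    rw [hQ, coeff_sub, hPcoeff, h1, coeff_C, if_neg (by omega : ¬ m = 0), sub_zero, hγ]
  have hchoose : (N.choose m : F) ≠ 0 := by
    have : N = k - 1 + m := by omega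
    rw [this]; exact hbin
  have hQm0 : Q.coeff m ≠ 0 := by rw [hQm]; exact mul_ne_zero hchoose hγ0
  have hQne : Q ≠ 0 := fun h => hQm0 (by rw [h, coeff_zero])
  -- degree of Q
  have hQdeg : Q.natDegree ≤ m := by
    rw [natDegree_le_iff_coeff_eq_zero]
    intro t ht
    rw [hQ, coeff_sub, coeff_C, if_neg (by omega : ¬ t = 0), sub_zero, hPcoeff]
    rcases le_or_gt t N with h | h
    · rw [show (∑ a : {x // x ∈ A}, c a * (a : F) ^ (N - t)) = 0 from hmom _ (by omega),
        mul_zero]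
    · rw [Nat.choose_eq_zero_of_lt h, Nat.cast_zero, zero_mul]
  -- each b ∈ B is a root of multiplicity at least k
  have hdvd : ∀ b ∈ B, (X - C b) ^ k ∣ Q := by
    intro b hb
    have hs : ∀ j < k, (∑ a : {x // x ∈ A}, c a * ((a : F) + b) ^ (N - j))
        = if j = 0 then γ else 0 := by
      intro j hj
      have hNj : N - j = m + (k - 1 - j) := by omega
      have hrw : (∑ a : {x // x ∈ A}, c a * ((a : F) + b) ^ (N - j))
          = ∑ i ∈ Finset.range (k - 1 - j + 1),
              (∑ a : {x // x ∈ A}, c a * (a : F) ^ i) *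
                (b ^ (k - 1 - j - i) * ((k - 1 - j).choose i : F)) := by
        calc (∑ a : {x // x ∈ A}, c a * ((a : F) + b) ^ (N - j))
            = ∑ a : {x // x ∈ A}, c a * ((a : F) + b) ^ (k - 1 - j) := by
              refine Finset.sum_congr rfl fun a _ => ?_
              rw [hNj, pow_add, hpow a a.2 b hb, one_mul]
          _ = ∑ a : {x // x ∈ A}, ∑ i ∈ Finset.range (k - 1 - j + 1),
                c a * ((a : F) ^ i * b ^ (k - 1 - j - i) * ((k - 1 - j).choose i : F)) := by
              refine Finset.sum_congr rfl fun a _ => ?_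
              rw [add_pow, Finset.mul_sum]
          _ = _ := by
              rw [Finset.sum_comm]
              refine Finset.sum_congr rfl fun i _ => ?_
              rw [Finset.sum_mul]
              exact Finset.sum_congr rfl fun a _ => by ring
      rcases Nat.eq_zero_or_pos j with hj0 | hj0
      · subst hj0
        rw [if_pos rfl, hrw, Finset.sum_eq_single (k - 1)]
        · simp [hγ]
        · intro i hi hne
          rw [hmom i (by rw [Finset.mem_range] at hi; omega), zero_mul]
        · intro h; exact absurd (Finset.mem_range.2 (by omega)) h
      · rw [if_neg (by omega), hrw]
        apply Finset.sum_eq_zero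
        intro i hi
        rw [hmom i (by rw [Finset.mem_range] at hi; omega), zero_mul]
    have hPexp : P = ∑ j ∈ Finset.range (N + 1),
        (X - C b) ^ j * C ((N.choose j : F) *
          ∑ a : {x // x ∈ A}, c a * ((a : F) + b) ^ (N - j)) := by
      have key : ∀ a : {x // x ∈ A}, (X + C (a : F)) ^ N
          = ∑ j ∈ Finset.range (N + 1),
              (X - C b) ^ j * C (((a : F) + b) ^ (N - j)) * (N.choose j : F[X]) := by
        intro a
        have h2 : (X : F[X]) + C (a : F) = (X - C b) + C ((a : F) + b) := by
          rw [C_add]; ring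
        rw [h2, add_pow]
        exact Finset.sum_congr rfl fun j _ => by rw [← C_pow]
      rw [hP]
      calc (∑ a : {x // x ∈ A}, C (c a) * (X + C (a : F)) ^ N)
          = ∑ a : {x // x ∈ A}, ∑ j ∈ Finset.range (N + 1),
              C (c a) * ((X - C b) ^ j * C (((a : F) + b) ^ (N - j)) * (N.choose j : F[X])) := by
            refine Finset.sum_congr rfl fun a _ => ?_
            rw [key a, Finset.mul_sum]
        _ = _ := by
            rw [Finset.sum_comm]
            refine Finset.sum_congr rfl fun j _ => ?_
            rw [C_mul, map_sum, Finset.mul_sum, Finset.mul_sum]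
            refine Finset.sum_congr rfl fun a _ => ?_
            rw [C_mul, C_eq_natCast]
            ring
    have hsplit : P = C γ + ∑ j ∈ Finset.Ico k (N + 1),
        (X - C b) ^ j * C ((N.choose j : F) *
          ∑ a : {x // x ∈ A}, c a * ((a : F) + b) ^ (N - j)) := by
      rw [hPexp, Finset.range_eq_Ico,
        ← Finset.sum_Ico_consecutive _ (Nat.zero_le k) (by omega : k ≤ N + 1)]
      congr 1
      rw [← Finset.range_eq_Ico, Finset.sum_eq_single_of_mem 0 (Finset.mem_range.2 (by omega))]
      · rw [hs 0 (by omega), if_pos rfl, pow_zero, one_mul, Nat.choose_zero_right,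
          Nat.cast_one, one_mul]
      · intro j hj hne
        rw [hs j (Finset.mem_range.1 hj), if_neg hne, mul_zero, map_zero, mul_zero]
    rw [hQ, hsplit, add_sub_cancel_left]
    apply Finset.dvd_sum
    intro j hj
    exact Dvd.dvd.mul_right (pow_dvd_pow _ (Finset.mem_Ico.1 hj).1) _
  -- assemble
  have hdvdprod : (∏ b ∈ B, (X - C b) ^ k) ∣ Q := by
    apply Finset.prod_dvd_of_coprime
    · intro b1 hb1 b2 hb2 hne
      exact (Polynomial.pairwise_coprime_X_sub_C (Function.injective_id) hne).pow
    · exact fun b hb => hdvd b hb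
  have hprodne : ∀ b ∈ B, (X - C b) ^ k ≠ 0 :=
    fun b _ => pow_ne_zero _ (X_sub_C_ne_zero b)
  have hdeg := Polynomial.natDegree_le_of_dvd hdvdprod hQne
  rw [Polynomial.natDegree_prod _ _ hprodne] at hdeg
  simp only [natDegree_pow, natDegree_X_sub_C, mul_one] at hdeg
  rw [Finset.sum_const, smul_eq_mul] at hdeg
  calc A.card * B.card = B.card * k := by rw [hk, mul_comm]
  _ ≤ Q.natDegree := hdeg
  _ ≤ m := hQdeg

end HansonPetridis

/-- Let `q = p^n` be a prime power and `d ∣ q - 1` with `d > 1`.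
If `A + B ⊆ S_d` and `p` does not divide `C(|A| - 1 + (q-1)/d, (q-1)/d)`, then
`|A|·|B| ≤ (q-1)/d`. -/
theorem stmt_10 (p n q : ℕ) (hp : p.Prime) (hn : 0 < n) (hq : q = p ^ n)
    (F : Type) [Field F] [Fintype F] [DecidableEq F] (hF : Fintype.card F = q)
    (d : ℕ) (hd : d ∣ q - 1) (hd1 : 1 < d)
    (A B : Finset F)
    (hAB : A + B ⊆ Finset.image (fun x : Fˣ => ((x : F) ^ d)) Finset.univ)
    (hbin : ¬ (p ∣ Nat.choose (A.card - 1 + (q - 1) / d) ((q - 1) / d))) :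
    A.card * B.card ≤ (q - 1) / d := by
  classical
  set m := (q - 1) / d with hm
  rcases A.eq_empty_or_nonempty with hA | hAne
  · simp [hA]
  rcases B.eq_empty_or_nonempty with hB | hBne
  · simp [hB]
  have hq2 : 2 ≤ q := by
    rw [hq]
    calc 2 ≤ p := hp.two_le
    _ = p ^ 1 := (pow_one p).symm
    _ ≤ p ^ n := Nat.pow_le_pow_right hp.pos hn
  have hdq : d ≤ q - 1 := Nat.le_of_dvd (by omega) hd
  have hdm : d * m = q - 1 := Nat.mul_div_cancel' hd
  have hm1 : 1 ≤ m := by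
    rcases Nat.eq_zero_or_pos m with h | h
    · rw [h, mul_zero] at hdm; omega
    · exact h
  -- characteristic
  have hcharF : CharP F p := by
    have hr := ringChar.charP F
    obtain ⟨n', hp', hcard⟩ := FiniteField.card F (ringChar F)
    have : ringChar F = p := by
      have h1 : ringChar F ∣ p ^ n := by
        rw [← hq, ← hF, hcard]
        exact dvd_pow_self _ (by positivity)
      exact ((Nat.prime_dvd_prime_iff_eq hp' hp).1 (hp'.dvd_of_dvd_pow h1))
    rwa [this] at hr
  -- power condition
  have hpow : ∀ a ∈ A, ∀ b ∈ B, (a + b) ^ m = 1 := by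
    intro a ha b hb
    obtain ⟨x, -, hx⟩ := Finset.mem_image.1 (hAB (Finset.add_mem_add ha hb))
    rw [← hx, ← pow_mul, hdm, ← hF]
    have : x ^ (Fintype.card F - 1) = 1 := by
      rw [← Fintype.card_units, pow_card_eq_one]
    calc ((x : F)) ^ (Fintype.card F - 1) = ((x ^ (Fintype.card F - 1) : Fˣ) : F) := by
          rw [Units.val_pow_eq_pow_val]
    _ = 1 := by rw [this, Units.val_one]
  have hbin' : ((A.card - 1 + m).choose m : F) ≠ 0 := by
    rw [Ne, CharP.cast_eq_zero_iff F p]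
    exact hbin
  exact HP_main m hm1 A B hAne hBne hpow hbin'
end

section
/- Let q be a power of a prime p, and let d be a divisor of q-1 with d > 1. Suppose A, B ⊆ F_q satisfy A + B = S_d with |A| ≥ 2 and |B| ≥ 2. Then exactly one of the following holds: either |A| · |B| = (q-1)/d (all sums a + b are distinct), or |A| · |B| > (q-1)/d and both binomial coefficients C(|A| - 1 + (q-1)/d, (q-1)/d) and C(|B| - 1 + (q-1)/d, (q-1)/d) are divisible by p. -/
open Pointwise

open Polynomial Finset

lemma moments {F : Type} [Field F] [DecidableEq F] (A : Finset F) (hA : A.Nonempty)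
    (i : ℕ) (hi : i < A.card) :
    ∑ a ∈ A, (∏ a' ∈ A.erase a, (a - a')⁻¹) * a ^ i
      = if i = A.card - 1 then 1 else 0 := by
  have hinj : Set.InjOn (id : F → F) ↑A := fun x _ y _ h => h
  have hdeg : ((X : F[X]) ^ i).degree < (A.card : ℕ) := by
    rw [degree_X_pow]; exact_mod_cast hi
  have h1 : (X : F[X]) ^ i = Lagrange.interpolate A id (fun x => ((X : F[X])^i).eval (id x)) :=
    Lagrange.eq_interpolate hinj hdeg
  have h2 := congrArg (fun f : F[X] => f.coeff (A.card - 1)) h1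
  simp only [Lagrange.interpolate_apply] at h2
  rw [coeff_X_pow] at h2
  have hbasis : ∀ a ∈ A, (Lagrange.basis A id a).coeff (A.card - 1)
      = ∏ a' ∈ A.erase a, (a - a')⁻¹ := by
    intro a ha
    have hb : Lagrange.basis A id a
        = C (Lagrange.nodalWeight A id a) * Lagrange.nodal (A.erase a) id := by
      rw [Lagrange.basis_eq_prod_sub_inv_mul_nodal_div ha, Lagrange.nodal_erase_eq_nodal_div ha]
    rw [hb, coeff_C_mul]
    have hm : (Lagrange.nodal (A.erase a) id).Monic := Lagrange.nodal_monic
    have hnd : (Lagrange.nodal (A.erase a) id).natDegree = A.card - 1 := by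
      rw [Lagrange.natDegree_nodal, card_erase_of_mem ha]
    rw [← hnd, hm.coeff_natDegree, mul_one]
    simp [Lagrange.nodalWeight]
  calc ∑ a ∈ A, (∏ a' ∈ A.erase a, (a - a')⁻¹) * a ^ i
      = ∑ a ∈ A, (C (((X : F[X])^i).eval (id a)) * Lagrange.basis A id a).coeff
          (A.card - 1) := by
        refine Finset.sum_congr rfl fun a ha => ?_
        rw [coeff_C_mul, hbasis a ha]
        simp [mul_comm]
    _ = if i = A.card - 1 then 1 else 0 := by
        rw [← finset_sum_coeff, ← h2]
        simp [eq_comm]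

/-- Key Hanson–Petridis lemma. -/
lemma hp_key {F : Type} [Field F] [DecidableEq F] (p : ℕ) [Fact p.Prime] [CharP F p]
    (m : ℕ) (hm : 1 ≤ m) (A B : Finset F) (hA : A.Nonempty)
    (hsum : ∀ a ∈ A, ∀ b ∈ B, (a + b) ^ m = 1)
    (hch : ¬ p ∣ Nat.choose (A.card - 1 + m) m) :
    A.card * B.card ≤ m := by
  classical
  set k := A.card with hk
  have hk1 : 1 ≤ k := Finset.card_pos.mpr hA
  set N := m + (k - 1) with hN
  set w : F → F := fun a => ∏ a' ∈ A.erase a, (a - a')⁻¹ with hw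
  have hmom : ∀ i, i < k → (∑ a ∈ A, w a * a ^ i) = if i = k - 1 then 1 else 0 := by
    intro i hi
    simpa only [hw] using moments A hA i hi
  set P : F[X] := (∑ a ∈ A, C (w a) * (X + C a) ^ N) - 1 with hP
  have hcoeff : ∀ t : ℕ, 1 ≤ t →
      P.coeff t = (N.choose t : F) * ∑ a ∈ A, w a * a ^ (N - t) := by
    intro t ht
    rw [hP, coeff_sub, finset_sum_coeff]
    have h1 : (1 : F[X]).coeff t = 0 := by
      rw [coeff_one, if_neg (by omega)]
    rw [h1, sub_zero, Finset.mul_sum]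
    refine Finset.sum_congr rfl fun a _ => ?_
    rw [coeff_C_mul, coeff_X_add_C_pow]
    ring
  have hhigh : ∀ t : ℕ, m < t → P.coeff t = 0 := by
    intro t htm
    rw [hcoeff t (le_trans hm htm.le)]
    rcases le_or_gt t N with hle | hlt
    · have hNt : N - t < k := by omega
      have hne : N - t ≠ k - 1 := by omega
      rw [hmom _ hNt, if_neg hne, mul_zero]
    · rw [Nat.choose_eq_zero_of_lt hlt]; simp
  have hdegP : P.natDegree ≤ m := natDegree_le_iff_coeff_eq_zero.mpr hhigh
  have hcm : P.coeff m = ((N.choose m : ℕ) : F) := by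
    rw [hcoeff m hm]
    have h1 : N - m = k - 1 := by omega
    rw [h1, hmom _ (by omega), if_pos rfl, mul_one]
  have hPne : P ≠ 0 := by
    intro h0
    apply hch
    have h2 : ((N.choose m : ℕ) : F) = 0 := by rw [← hcm, h0, coeff_zero]
    rw [CharP.cast_eq_zero_iff F p] at h2
    rwa [hN, add_comm] at h2
  have hdvd : ∀ b ∈ B, (X - C b) ^ k ∣ P := by
    intro b hb
    set σ : ℕ → F := fun j => ∑ a ∈ A, w a * (a + b) ^ (N - j) with hσ
    have hσlt : ∀ j, j < k → σ j = if j = 0 then 1 else 0 := by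
      intro j hj
      have h1 : ∀ a ∈ A, w a * (a + b) ^ (N - j) = w a * (a + b) ^ (k - 1 - j) := by
        intro a ha
        have h2 : N - j = m + (k - 1 - j) := by omega
        rw [h2, pow_add, hsum a ha b hb, one_mul]
      have h3 : σ j = ∑ a ∈ A, w a * (a + b) ^ (k - 1 - j) := by
        rw [hσ]; exact Finset.sum_congr rfl h1
      rw [h3]
      have h4 : ∀ a : F, (a + b) ^ (k - 1 - j)
          = ∑ t ∈ Finset.range (k - 1 - j + 1), a ^ t * b ^ (k - 1 - j - t)
              * ((k - 1 - j).choose t : F) := fun a => add_pow a b _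
      simp_rw [h4, Finset.mul_sum]
      rw [Finset.sum_comm]
      have h5 : ∀ t ∈ Finset.range (k - 1 - j + 1),
          (∑ a ∈ A, w a * (a ^ t * b ^ (k - 1 - j - t) * ((k - 1 - j).choose t : F)))
            = (if t = k - 1 then 1 else 0) * (b ^ (k - 1 - j - t) * ((k - 1 - j).choose t : F)) := by
        intro t ht
        have htk : t < k := by simp only [Finset.mem_range] at ht; omega
        rw [← hmom t htk, Finset.sum_mul]
        refine Finset.sum_congr rfl fun a _ => by ring
      rw [Finset.sum_congr rfl h5]
      simp_rw [ite_mul, one_mul, zero_mul]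
      rw [Finset.sum_ite_eq' (Finset.range (k - 1 - j + 1)) (k - 1)
        (fun t => b ^ (k - 1 - j - t) * ((k - 1 - j).choose t : F))]
      by_cases hj0 : j = 0
      · subst hj0
        rw [if_pos (by simp only [Finset.mem_range]; omega), if_pos rfl]
        simp [Nat.sub_self]
      · rw [if_neg (by simp only [Finset.mem_range]; omega), if_neg hj0]
    set T : ℕ → F[X] := fun j => (X - C b) ^ j * C (σ j * (N.choose j : F)) with hT
    have hPsum : P = ∑ j ∈ Finset.range (N + 1), T j - 1 := by
      rw [hP]
      congr 1
      have hexp : ∀ a : F, (X + C a : F[X]) ^ N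
          = ∑ j ∈ Finset.range (N + 1), (X - C b) ^ j * C ((a + b) ^ (N - j))
              * ((N.choose j : ℕ) : F[X]) := by
        intro a
        have h6 : (X + C a : F[X]) = (X - C b) + C (a + b) := by rw [C_add]; ring
        rw [h6, add_pow]
        exact Finset.sum_congr rfl fun j _ => by rw [← C_pow]
      calc ∑ a ∈ A, C (w a) * (X + C a) ^ N
          = ∑ a ∈ A, ∑ j ∈ Finset.range (N + 1),
              C (w a) * ((X - C b) ^ j * C ((a + b) ^ (N - j)) * ((N.choose j : ℕ) : F[X])) := by
            refine Finset.sum_congr rfl fun a _ => ?_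
            rw [hexp a, Finset.mul_sum]
        _ = ∑ j ∈ Finset.range (N + 1), ∑ a ∈ A,
              C (w a) * ((X - C b) ^ j * C ((a + b) ^ (N - j)) * ((N.choose j : ℕ) : F[X])) :=
            Finset.sum_comm
        _ = ∑ j ∈ Finset.range (N + 1), T j := by
            refine Finset.sum_congr rfl fun j _ => ?_
            rw [hT]
            have h7 : ∀ a ∈ A, C (w a) * ((X - C b) ^ j * C ((a + b) ^ (N - j))
                * ((N.choose j : ℕ) : F[X]))
                = (X - C b) ^ j * (C (w a * (a + b) ^ (N - j)) * C ((N.choose j : ℕ) : F)) := by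
              intro a _
              rw [C_mul, ← C_eq_natCast]
              ring
            rw [Finset.sum_congr rfl h7, ← Finset.mul_sum, ← Finset.sum_mul, ← map_sum]
            simp only [hσ, C_mul]
    have hklN : k ≤ N + 1 := by omega
    have hsplit : ∑ j ∈ Finset.range (N + 1), T j
        = ∑ j ∈ Finset.range k, T j + ∑ j ∈ Finset.Ico k (N + 1), T j :=
      (Finset.sum_range_add_sum_Ico T hklN).symm
    have hlow : ∑ j ∈ Finset.range k, T j = 1 := by
      rw [Finset.sum_eq_single_of_mem 0 (Finset.mem_range.mpr hk1)]
      · rw [hT]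
        simp only [pow_zero, one_mul]
        rw [hσlt 0 hk1, if_pos rfl, one_mul, Nat.choose_zero_right]
        simp
      · intro j hjr hj0
        rw [hT]
        simp only
        rw [hσlt j (Finset.mem_range.mp hjr), if_neg hj0, zero_mul, map_zero, mul_zero]
    rw [hPsum, hsplit, hlow, add_sub_cancel_left]
    refine Finset.dvd_sum fun j hj => ?_
    have hjk : k ≤ j := (Finset.mem_Ico.mp hj).1
    exact Dvd.dvd.mul_right (pow_dvd_pow _ hjk) _
  have hcop : (↑B : Set F).Pairwise (Function.onFun IsCoprime fun b : F => (X - C b) ^ k) := by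
    intro x _ y _ hxy
    exact (Polynomial.pairwise_coprime_X_sub_C (Function.injective_id) hxy).pow
  have hQdvd : (∏ b ∈ B, (X - C b) ^ k) ∣ P := Finset.prod_dvd_of_coprime hcop hdvd
  have hQdeg : (∏ b ∈ B, (X - C b) ^ k).natDegree = B.card * k := by
    rw [Polynomial.natDegree_prod _ _ (fun b _ => pow_ne_zero k (X_sub_C_ne_zero b))]
    simp [natDegree_pow]
  have hfin : B.card * k ≤ P.natDegree := by
    rw [← hQdeg]
    exact Polynomial.natDegree_le_of_dvd hQdvd hPne
  calc A.card * B.card = B.card * k := by rw [hk, mul_comm]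
    _ ≤ P.natDegree := hfin
    _ ≤ m := hdegP

/-- Let `q = p^n` be a prime power and `d ∣ q - 1` with `d > 1`.
If `A + B = S_d` with `|A|, |B| ≥ 2`, then exactly one of the following holds:
either `|A|·|B| = (q-1)/d`, or `|A|·|B| > (q-1)/d` and `p` divides both
`C(|A| - 1 + (q-1)/d, (q-1)/d)` and `C(|B| - 1 + (q-1)/d, (q-1)/d)`. -/
theorem stmt_11 (p n q : ℕ) (hp : p.Prime) (hn : 0 < n) (hq : q = p ^ n)
    (F : Type) [Field F] [Fintype F] [DecidableEq F] (hF : Fintype.card F = q)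
    (d : ℕ) (hd : d ∣ q - 1) (hd1 : 1 < d)
    (A B : Finset F)
    (hAB : A + B = Finset.image (fun x : Fˣ => ((x : F) ^ d)) Finset.univ)
    (hA : 2 ≤ A.card) (hB : 2 ≤ B.card) :
    Xor' (A.card * B.card = (q - 1) / d)
      ((q - 1) / d < A.card * B.card ∧
        p ∣ Nat.choose (A.card - 1 + (q - 1) / d) ((q - 1) / d) ∧
        p ∣ Nat.choose (B.card - 1 + (q - 1) / d) ((q - 1) / d)) := by
  classical
  haveI : Fact p.Prime := ⟨hp⟩
  set m := (q - 1) / d with hm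
  -- basic numerics
  have hq2 : 2 ≤ q := by
    rw [hq]
    calc 2 ≤ p := hp.two_le
      _ = p ^ 1 := (pow_one p).symm
      _ ≤ p ^ n := Nat.pow_le_pow_right hp.pos hn
  have hq1 : 1 ≤ q - 1 := by omega
  have hdle : d ≤ q - 1 := Nat.le_of_dvd (by omega) hd
  have hm1 : 1 ≤ m := (Nat.one_le_div_iff (by omega)).mpr hdle
  have hdm : d * m = q - 1 := Nat.mul_div_cancel' hd
  -- characteristic
  haveI hcharF : CharP F p := by
    have h1 : (ringChar F).Prime := CharP.char_is_prime F (ringChar F)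
    obtain ⟨n', _, hcard⟩ := FiniteField.card F (ringChar F)
    have h2 : p = ringChar F := by
      have hdvd : p ∣ ringChar F ^ (n' : ℕ) := by
        rw [← hcard, hF, hq]
        exact dvd_pow_self p hn.ne'
      exact (Nat.prime_dvd_prime_iff_eq hp h1).mp (hp.dvd_of_dvd_pow hdvd)
    rw [h2]
    exact ringChar.charP F
  -- every sum is an m-th root of unity
  set S : Finset F := Finset.image (fun x : Fˣ => ((x : F) ^ d)) Finset.univ with hS
  have hsum : ∀ a ∈ A, ∀ b ∈ B, (a + b) ^ m = 1 := by
    intro a ha b hb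
    have hmem : a + b ∈ S := by rw [← hAB]; exact Finset.add_mem_add ha hb
    rw [hS, Finset.mem_image] at hmem
    obtain ⟨x, -, hx⟩ := hmem
    rw [← hx, ← pow_mul, hdm]
    have : ((x : F)) ^ (q - 1) = ((x ^ (q - 1) : Fˣ) : F) := by
      rw [Units.val_pow_eq_pow_val]
    rw [this]
    have hcard : Fintype.card Fˣ = q - 1 := by rw [Fintype.card_units, hF]
    rw [← hcard, pow_card_eq_one, Units.val_one]
  -- card S ≥ m
  have hScard : m ≤ S.card := by
    have hfib : ∀ c ∈ Finset.univ.image (fun x : Fˣ => ((x : F) ^ d)),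
        (Finset.univ.filter fun x : Fˣ => ((x : F) ^ d) = c).card ≤ d := by
      intro c _
      have hinj : Set.InjOn (fun x : Fˣ => (x : F))
          ↑(Finset.univ.filter fun x : Fˣ => ((x : F) ^ d) = c) :=
        fun x _ y _ h => Units.ext h
      have hmap : ∀ x ∈ (Finset.univ.filter fun x : Fˣ => ((x : F) ^ d) = c),
          ((x : F)) ∈ ((X : F[X]) ^ d - Polynomial.C c).roots.toFinset := by
        intro x hx
        rw [Finset.mem_filter] at hx
        rw [Multiset.mem_toFinset, Polynomial.mem_roots
          (Polynomial.X_pow_sub_C_ne_zero (by omega) c)]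
        simp [Polynomial.IsRoot, hx.2]
      calc (Finset.univ.filter fun x : Fˣ => ((x : F) ^ d) = c).card
          ≤ ((X : F[X]) ^ d - Polynomial.C c).roots.toFinset.card :=
            Finset.card_le_card_of_injOn _ hmap hinj
        _ ≤ Multiset.card ((X : F[X]) ^ d - Polynomial.C c).roots :=
            Multiset.toFinset_card_le _
        _ ≤ ((X : F[X]) ^ d - Polynomial.C c).natDegree := Polynomial.card_roots' _
        _ = d := Polynomial.natDegree_X_pow_sub_C
    have h1 : (Finset.univ : Finset Fˣ).card ≤ d * S.card :=
      Finset.card_le_mul_card_image _ d hfib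
    have h2 : q - 1 ≤ d * S.card := by
      rwa [Finset.card_univ, Fintype.card_units, hF] at h1
    calc m = (q - 1) / d := hm
      _ ≤ (d * S.card) / d := Nat.div_le_div_right h2
      _ = S.card := Nat.mul_div_cancel_left _ (by omega)
  have hmle : m ≤ A.card * B.card := by
    calc m ≤ S.card := hScard
      _ = (A + B).card := by rw [hAB]
      _ ≤ A.card * B.card := Finset.card_add_le
  have hAne : A.Nonempty := Finset.card_pos.mp (by omega)
  have hBne : B.Nonempty := Finset.card_pos.mp (by omega)
  by_cases heq : A.card * B.card = m
  · exact Or.inl ⟨heq, fun hc => absurd hc.1 (by omega)⟩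
  · refine Or.inr ⟨⟨lt_of_le_of_ne hmle (Ne.symm heq), ?_, ?_⟩, heq⟩
    · by_contra hc
      exact heq (le_antisymm (hp_key p m hm1 A B hAne hsum hc) hmle)
    · by_contra hc
      have hsum' : ∀ b ∈ B, ∀ a ∈ A, (b + a) ^ m = 1 := fun b hb a ha => by
        rw [add_comm]; exact hsum a ha b hb
      have := hp_key p m hm1 B A hBne hsum' hc
      rw [mul_comm] at this
      exact heq (le_antisymm this hmle)
end

section
/- Let p ≥ 7 be a prime and n a positive integer. Then there exists a set A ⊆ F_{p^n} such that A + A = F_{p^n}* (the set of all nonzero elements of F_{p^n}). Consequently, if q = p^n with n ≥ 2, k is a proper divisor of n, and d = (q-1)/(p^k - 1), then S_d can be written as A + A for some A ⊆ F_q. -/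
open Finset Pointwise

private lemma cast_ne_zero_aux (p s : ℕ) (hp : 2 ≤ p) (h1 : s ≠ 0) (h2 : s ≠ p)
    (h3 : s ≤ p + 1) : (s : ZMod p) ≠ 0 := by
  intro h0
  have : p ∣ s := (ZMod.natCast_eq_zero_iff s p).mp h0
  rcases this with ⟨c, hc⟩
  rcases c with _ | _ | c
  · omega
  · omega
  · have h2p : 2 * p ≤ s := by nlinarith
    omega

lemma zmod_base (p : ℕ) [NeZero p] (hp : p.Prime) (hp7 : 7 ≤ p) :
    ∃ B : Finset (ZMod p), B + B = Finset.univ \ {0} := by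
  haveI : Fact p.Prime := ⟨hp⟩
  set h := p / 2 with hh
  have hodd : p % 2 = 1 := hp.eq_two_or_odd.resolve_left (by omega)
  have hp2 : p = 2 * h + 1 := by omega
  have hh3 : 3 ≤ h := by omega
  refine ⟨((Finset.Icc 1 (h-1)).image (Nat.cast : ℕ → ZMod p)) ∪ {((h+1 : ℕ) : ZMod p)}, ?_⟩
  ext c
  simp only [Finset.mem_add, mem_union, mem_image, mem_Icc, mem_singleton, mem_sdiff,
    mem_univ, true_and]
  constructor
  · rintro ⟨x, hx, y, hy, rfl⟩
    have hgen : ∀ z : ZMod p, ((∃ a, (1 ≤ a ∧ a ≤ h - 1) ∧ (a : ZMod p) = z) ∨ z = ((h+1 : ℕ) : ZMod p)) →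
        ∃ a : ℕ, ((1 ≤ a ∧ a ≤ h - 1) ∨ a = h + 1) ∧ (a : ZMod p) = z := by
      rintro z (⟨a, ha, rfl⟩ | rfl)
      · exact ⟨a, Or.inl ha, rfl⟩
      · exact ⟨h + 1, Or.inr rfl, rfl⟩
    obtain ⟨a, ha, rfl⟩ := hgen x hx
    obtain ⟨b, hb, rfl⟩ := hgen y hy
    rw [← Nat.cast_add]
    rcases ha with ha | rfl <;> rcases hb with hb | rfl
    · exact cast_ne_zero_aux p (a+b) hp.two_le (by omega) (by omega) (by omega)
    · exact cast_ne_zero_aux p (a+(h+1)) hp.two_le (by omega) (by omega) (by omega)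
    · exact cast_ne_zero_aux p ((h+1)+b) hp.two_le (by omega) (by omega) (by omega)
    · exact cast_ne_zero_aux p ((h+1)+(h+1)) hp.two_le (by omega) (by omega) (by omega)
  · intro hc
    set v := c.val with hv
    have hvc : ((v : ℕ) : ZMod p) = c := ZMod.natCast_rightInverse c
    have hvp : v < p := ZMod.val_lt c
    have hv0 : v ≠ 0 := fun h0 => hc ((ZMod.val_eq_zero c).mp h0)
    -- helper: if a + b = v then ↑a + ↑b = c
    have key1 : ∀ a b : ℕ, a + b = v → (a : ZMod p) + (b : ZMod p) = c := by
      intro a b hab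
      rw [← Nat.cast_add, hab, hvc]
    have key2 : ∀ a b : ℕ, a + b = p + v → (a : ZMod p) + (b : ZMod p) = c := by
      intro a b hab
      rw [← Nat.cast_add, hab, Nat.cast_add, ZMod.natCast_self, zero_add, hvc]
    have hcase : v = 1 ∨ (2 ≤ v ∧ v ≤ h) ∨ (h + 1 ≤ v ∧ v ≤ 2*h - 2) ∨ (2*h - 1 ≤ v ∧ v ≤ 2*h) := by
      omega
    rcases hcase with h1 | h1 | h1 | h1
    · exact ⟨_, Or.inr rfl, _, Or.inr rfl, key2 (h+1) (h+1) (by omega)⟩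
    · exact ⟨(1 : ℕ), Or.inl ⟨1, by omega, rfl⟩, (v-1 : ℕ), Or.inl ⟨v-1, by omega, rfl⟩,
        key1 1 (v-1) (by omega)⟩
    · exact ⟨((v-(h-1) : ℕ) : ZMod p), Or.inl ⟨v-(h-1), by omega, rfl⟩,
        ((h-1 : ℕ) : ZMod p), Or.inl ⟨h-1, by omega, rfl⟩, key1 _ _ (by omega)⟩
    · exact ⟨_, Or.inr rfl, ((v-(h+1) : ℕ) : ZMod p), Or.inl ⟨v-(h+1), by omega, rfl⟩,
        key1 (h+1) (v-(h+1)) (by omega)⟩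
lemma prod_lemma {G H : Type} [AddCommGroup G] [AddCommGroup H] [Fintype G] [Fintype H]
    [DecidableEq G] [DecidableEq H] (B : Finset G) (S : Finset H)
    (hB : B + B = Finset.univ \ {0}) (hS : S + S = Finset.univ \ {0}) :
    ∃ A : Finset (G × H), A + A = Finset.univ \ {0} := by
  have hS0 : (0 : H) ∉ S := by
    intro h0
    have h00 : (0 : H) + 0 ∈ S + S := Finset.add_mem_add h0 h0
    rw [hS] at h00
    simp at h00
  refine ⟨B ×ˢ {0} ∪ Finset.univ ×ˢ S, ?_⟩
  ext ⟨c1, c2⟩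
  simp only [Finset.mem_add, mem_union, mem_product, mem_singleton, mem_univ, true_and,
    mem_sdiff]
  constructor
  · rintro ⟨⟨x1, x2⟩, hx, ⟨y1, y2⟩, hy, hxy⟩
    rw [Prod.mk_add_mk, Prod.mk.injEq] at hxy
    obtain ⟨hc1, hc2⟩ := hxy
    dsimp only at hx hy
    intro hcc
    rw [Prod.mk_eq_zero] at hcc
    obtain ⟨e1, e2⟩ := hcc
    rcases hx with ⟨hx1, rfl⟩ | hx2 <;> rcases hy with ⟨hy1, rfl⟩ | hy2
    · have hmem : x1 + y1 ∈ B + B := Finset.add_mem_add hx1 hy1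
      rw [hB] at hmem
      simp only [mem_sdiff, mem_univ, true_and, mem_singleton] at hmem
      exact hmem (by rw [hc1, e1])
    · simp only [zero_add] at hc2
      exact hS0 (by rwa [hc2, e2] at hy2)
    · simp only [add_zero] at hc2
      exact hS0 (by rwa [hc2, e2] at hx2)
    · have hmem : x2 + y2 ∈ S + S := Finset.add_mem_add hx2 hy2
      rw [hS] at hmem
      simp only [mem_sdiff, mem_univ, true_and, mem_singleton] at hmem
      exact hmem (by rw [hc2, e2])
  · intro hne
    by_cases h2 : c2 = 0
    · subst h2
      have h1 : c1 ≠ 0 := by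
        intro h
        exact hne (by rw [h]; rfl)
      have : c1 ∈ B + B := by rw [hB]; simp [h1]
      rw [Finset.mem_add] at this
      obtain ⟨b1, hb1, b2, hb2, hb⟩ := this
      exact ⟨(b1, 0), Or.inl ⟨hb1, rfl⟩, (b2, 0), Or.inl ⟨hb2, rfl⟩,
        by simp [Prod.mk_add_mk, hb]⟩
    · have : c2 ∈ S + S := by rw [hS]; simp [h2]
      rw [Finset.mem_add] at this
      obtain ⟨s1, hs1, s2, hs2, hs⟩ := this
      exact ⟨(c1, s1), Or.inr hs1, (0, s2), Or.inr hs2, by simp [Prod.mk_add_mk, hs]⟩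

lemma transfer_lemma {G H : Type} [AddCommGroup G] [AddCommGroup H] [Fintype G] [Fintype H]
    [DecidableEq G] [DecidableEq H] (e : G ≃+ H) (B : Finset G)
    (hB : B + B = Finset.univ \ {0}) :
    ∃ A : Finset H, A + A = Finset.univ \ {0} := by
  refine ⟨B.image e, ?_⟩
  rw [← Finset.image_add e]
  rw [hB]
  ext y
  simp only [mem_image, mem_sdiff, mem_univ, true_and, mem_singleton]
  constructor
  · rintro ⟨g, hg, rfl⟩
    simpa using hg
  · intro hy
    exact ⟨e.symm y, by simp [show e.symm y ≠ 0 by simp [hy]], by simp⟩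

lemma pi_lemma (p : ℕ) [NeZero p] (hp : p.Prime) (hp7 : 7 ≤ p) :
    ∀ m : ℕ, 0 < m → ∃ S : Finset (Fin m → ZMod p), S + S = Finset.univ \ {0} := by
  intro m hm
  induction m with
  | zero => omega
  | succ m ih =>
    rcases Nat.eq_zero_or_pos m with rfl | hm'
    · obtain ⟨B, hB⟩ := zmod_base p hp hp7
      have e : ZMod p ≃+ (Fin 1 → ZMod p) :=
        { toFun := fun x _ => x
          invFun := fun f => f 0
          left_inv := fun x => rfl
          right_inv := fun f => by funext i; rw [Subsingleton.elim i 0]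
          map_add' := fun x y => rfl }
      exact transfer_lemma e B hB
    · obtain ⟨S, hS⟩ := ih hm'
      obtain ⟨B, hB⟩ := zmod_base p hp hp7
      obtain ⟨A, hA⟩ := prod_lemma B S hB hS
      have e : (ZMod p × (Fin m → ZMod p)) ≃+ (Fin (m+1) → ZMod p) :=
        { toFun := fun x => Fin.cons x.1 x.2
          invFun := fun f => (f 0, fun i => f i.succ)
          left_inv := fun x => by simp
          right_inv := fun f => by
            funext i
            refine Fin.cases ?_ ?_ i <;> simp
          map_add' := fun x y => by
            funext i
            refine Fin.cases ?_ ?_ i <;> simp }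
      exact transfer_lemma e A hA
lemma field_lemma (p : ℕ) (hp : p.Prime) (hp7 : 7 ≤ p)
    (E : Type) [Field E] [Fintype E] [DecidableEq E] [CharP E p] :
    ∃ A : Finset E, A + A = Finset.univ \ {0} := by
  haveI : Fact p.Prime := ⟨hp⟩
  haveI : NeZero p := ⟨hp.ne_zero⟩
  letI : Algebra (ZMod p) E := ZMod.algebra E p
  obtain ⟨S, hS⟩ := pi_lemma p hp hp7 (Module.finrank (ZMod p) E) Module.finrank_pos
  exact transfer_lemma ((Module.finBasis (ZMod p) E).equivFun.toAddEquiv.symm) S hS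

lemma charP_of_card (p n : ℕ) (hp : p.Prime) (hn : 0 < n) (F : Type) [Field F] [Fintype F]
    (hF : Fintype.card F = p ^ n) : CharP F p := by
  obtain ⟨m, hc, hcard⟩ := FiniteField.card F (ringChar F)
  have hpr : p = ringChar F := by
    have hdvd : p ∣ ringChar F ^ (m : ℕ) := by
      rw [← hcard, hF]
      exact dvd_pow_self p hn.ne'
    exact (Nat.prime_dvd_prime_iff_eq hp hc).mp (hp.dvd_of_dvd_pow hdvd)
  exact hpr ▸ ringChar.charP F
set_option synthInstance.maxHeartbeats 1000000 in
set_option maxHeartbeats 1000000 in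
/-- Let `p ≥ 7` be a prime and `n ≥ 1`.  Then there is `A ⊆ F_{p^n}`
with `A + A = F_{p^n}*`.  Consequently, if `n ≥ 2` and `k` is a proper divisor of `n`,
then with `d = (p^n - 1)/(p^k - 1)` the subgroup `S_d` can be written as `A + A`. -/
theorem stmt_14 (p n : ℕ) (hp : p.Prime) (hp7 : 7 ≤ p) (hn : 0 < n)
    (F : Type) [Field F] [Fintype F] [DecidableEq F] (hF : Fintype.card F = p ^ n) :
    (∃ A : Finset F, A + A = Finset.univ \ {(0 : F)}) ∧
    (∀ k : ℕ, 2 ≤ n → 0 < k → k ∣ n → k ≠ n →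
      ∃ A : Finset F,
        A + A = Finset.image
          (fun x : Fˣ => ((x : F) ^ ((p ^ n - 1) / (p ^ k - 1)))) Finset.univ) := by
  haveI : Fact p.Prime := ⟨hp⟩
  haveI : CharP F p := charP_of_card p n hp hn F hF
  constructor
  · exact field_lemma p hp hp7 F
  · intro k _ hk hkdvd _
    set d := (p ^ n - 1) / (p ^ k - 1) with hd_def
    have hppos : 0 < p := hp.pos
    have hpk2 : 2 ≤ p ^ k := by
      calc 2 ≤ p := by omega
      _ = p ^ 1 := (pow_one p).symm
      _ ≤ p ^ k := Nat.pow_le_pow_right hppos hk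
    have hdvd : p ^ k - 1 ∣ p ^ n - 1 := by
      obtain ⟨m, rfl⟩ := hkdvd
      have h1 : p ^ k - 1 ∣ (p ^ k) ^ m - 1 ^ m := Nat.sub_dvd_pow_sub_pow _ 1 m
      rwa [one_pow, ← pow_mul] at h1
    have hd : d * (p ^ k - 1) = p ^ n - 1 := Nat.div_mul_cancel hdvd
    have hodd : Odd (p ^ k) := (hp.odd_of_ne_two (by omega)).pow
    -- the subfield of elements fixed by Frobenius^k
    let R : Subring F :=
      { carrier := {x | x ^ p ^ k = x}
        one_mem' := one_pow _
        mul_mem' := fun {a b} ha hb => by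
          simp only [Set.mem_setOf_eq] at *
          rw [mul_pow, ha, hb]
        zero_mem' := zero_pow (by positivity)
        add_mem' := fun {a b} ha hb => by
          simp only [Set.mem_setOf_eq] at *
          rw [add_pow_char_pow, ha, hb]
        neg_mem' := fun {a} ha => by
          simp only [Set.mem_setOf_eq] at *
          rw [hodd.neg_pow, ha] }
    haveI : Fintype R := Fintype.ofFinite R
    letI : Field R := Fintype.fieldOfDomain R
    obtain ⟨A, hA⟩ := field_lemma p hp hp7 R
    refine ⟨A.image R.subtype, ?_⟩
    rw [← Finset.image_add R.subtype, hA]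
    have he : p ^ k - 1 + 1 = p ^ k := Nat.succ_pred_eq_of_pos (by positivity)
    ext y
    simp only [Finset.mem_image, Finset.mem_sdiff, Finset.mem_univ, true_and,
      Finset.mem_singleton]
    constructor
    · rintro ⟨z, hz, rfl⟩
      -- z : R, z ≠ 0 ; R.subtype z = z.val
      have hy0 : (z : F) ≠ 0 := fun h => hz (Subtype.ext h)
      have hyfix : (z : F) ^ p ^ k = (z : F) := z.2
      -- show z.val is a d-th power of a unit
      have hy1 : (z : F) ^ (p ^ k - 1) = 1 := by
        have h1 : (z : F) ^ (p ^ k - 1) * (z : F) = 1 * (z : F) := by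
          rw [← pow_succ, he, hyfix, one_mul]
        exact mul_right_cancel₀ hy0 h1
      obtain ⟨g, hg⟩ := IsCyclic.exists_monoid_generator (α := Fˣ)
      have hog : orderOf g = p ^ n - 1 := by
        rw [orderOf_eq_card_of_forall_mem_zpowers, Nat.card_eq_fintype_card, Fintype.card_units, hF]
        intro x
        obtain ⟨t, ht⟩ := hg x
        dsimp only at ht
        exact ⟨(t : ℤ), by show g ^ (t : ℤ) = x; rw [zpow_natCast]; exact ht⟩
      set u : Fˣ := Units.mk0 _ hy0 with hu
      have hu1 : u ^ (p ^ k - 1) = 1 := Units.ext (by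
        rw [Units.val_pow_eq_pow_val]
        simpa [hu] using hy1)
      obtain ⟨t, ht⟩ := hg u
      dsimp only at ht
      have hdt : orderOf g ∣ t * (p ^ k - 1) := by
        apply orderOf_dvd_of_pow_eq_one
        rw [pow_mul, ht, hu1]
      rw [hog, ← hd] at hdt
      have hdt' : d ∣ t := by
        have h1 : 0 < p ^ k - 1 := by omega
        exact (Nat.mul_dvd_mul_iff_right h1).mp hdt
      obtain ⟨s, rfl⟩ := hdt'
      refine ⟨g ^ s, ?_⟩
      have hgs : (g ^ s) ^ d = u := by rw [← pow_mul, mul_comm s d, ht]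
      calc ((g ^ s : Fˣ) : F) ^ d = (((g ^ s) ^ d : Fˣ) : F) := by
            push_cast
            ring
        _ = (u : F) := by rw [hgs]
        _ = _ := rfl
    · rintro ⟨x, rfl⟩
      have hy0 : ((x : F) ^ d) ≠ 0 := pow_ne_zero _ (Units.ne_zero x)
      have hx1 : (x : F) ^ (p ^ n - 1) = 1 := by
        rw [← hF]
        exact FiniteField.pow_card_sub_one_eq_one _ (Units.ne_zero x)
      have hfix : ((x : F) ^ d) ^ p ^ k = (x : F) ^ d := by
        rw [← pow_mul, ← he, Nat.mul_succ, pow_add, hd, hx1, one_mul]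
      exact ⟨⟨(x : F) ^ d, hfix⟩, fun h => hy0 (congrArg Subtype.val h), rfl⟩
end

section
/- Let p ≥ 5 be a prime and n a positive integer. Then there exist sets A, B, C ⊆ F_{p^n} with |A| ≥ 2, |B| ≥ 2, |C| ≥ 2 such that A + B + C = F_{p^n}* (the set of all nonzero elements of F_{p^n}). -/
open Pointwise

/-- Let `p ≥ 5` be a prime and `n ≥ 1`.  Then there are sets
`A, B, C ⊆ F_{p^n}` with `|A|, |B|, |C| ≥ 2` and `A + B + C = F_{p^n}*`. -/
theorem stmt_15 (p n : ℕ) (hp : p.Prime) (hp5 : 5 ≤ p) (hn : 0 < n)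
    (F : Type) [Field F] [Fintype F] [DecidableEq F] (hF : Fintype.card F = p ^ n) :
    ∃ A B C : Finset F, 2 ≤ A.card ∧ 2 ≤ B.card ∧ 2 ≤ C.card ∧
      A + B + C = Finset.univ \ {(0 : F)} := by
  -- characteristic is p
  have hchar : ringChar F = p := by
    obtain ⟨k, hq, hcard⟩ := FiniteField.card F (ringChar F)
    have : ringChar F ∣ p ^ n := by rw [← hF, hcard]; exact dvd_pow_self _ k.2.ne'
    exact (Nat.prime_dvd_prime_iff_eq hq hp).mp (hq.dvd_of_dvd_pow this)
  haveI : CharP F p := hchar ▸ ringChar.charP F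
  have hcast : ∀ m : ℕ, 0 < m → m < p → (m : F) ≠ 0 := by
    intro m hm hmp h
    have := (CharP.cast_eq_zero_iff F p m).mp h
    exact absurd (Nat.le_of_dvd hm this) (not_le.mpr hmp)
  have h2 : (2 : F) ≠ 0 := by
    have := hcast 2 (by norm_num) (by omega); simpa using this
  have h3 : (3 : F) ≠ 0 := by
    have := hcast 3 (by norm_num) (by omega); simpa using this
  have h1 : (1 : F) ≠ 0 := one_ne_zero
  have hne11 : (1 : F) ≠ -1 := by
    intro h; exact h2 (by linear_combination h)
  have h01 : (0 : F) ≠ 1 := h1.symm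
  have h0m1 : (0 : F) ≠ -1 := by intro h; exact h1 (by rw [show (1:F) = -(-1) by ring, ← h]; ring)
  refine ⟨Finset.univ \ {0, 1, -1}, {0, 1}, {0, -1}, ?_, ?_, ?_, ?_⟩
  · -- card A ≥ 2
    have hsub : ({0, 1, -1} : Finset F) ⊆ Finset.univ := Finset.subset_univ _
    rw [Finset.card_sdiff_of_subset hsub]
    have hle : ({0, 1, -1} : Finset F).card ≤ 3 := by
      apply le_trans (Finset.card_insert_le _ _)
      simp [Finset.card_insert_le]
      exact Nat.lt_of_le_of_lt (Finset.card_le_two (a := (1 : F)) (b := -1)) (by norm_num)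
    have hcard5 : 5 ≤ Fintype.card F := by
      rw [hF]; calc 5 ≤ p := hp5
        _ ≤ p ^ n := Nat.le_self_pow hn.ne' p
    have := Finset.card_univ (α := F)
    omega
  · rw [Finset.card_insert_of_notMem (by simpa using h01), Finset.card_singleton]
  · rw [Finset.card_insert_of_notMem (by simpa using h0m1), Finset.card_singleton]
  · ext x
    simp only [Finset.mem_add, Finset.mem_sdiff, Finset.mem_univ, Finset.mem_insert,
      Finset.mem_singleton, true_and]
    constructor
    · rintro ⟨y, ⟨a, ha, b, hb, rfl⟩, c, hc, rfl⟩
      push_neg at ha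
      obtain ⟨ha0, ha1, ham1⟩ := ha
      rcases hb with rfl | rfl <;> rcases hc with rfl | rfl <;>
        intro h <;> [exact ha0 (by linear_combination h);
          exact ha1 (by linear_combination h);
          exact ham1 (by linear_combination h);
          exact ha0 (by linear_combination h)]
    · intro hx
      by_cases hx1 : x = 1
      · subst hx1
        refine ⟨2 + 0, ⟨2, ?_, 0, by simp, rfl⟩, -1, by simp, by ring⟩
        push_neg
        refine ⟨h2, ?_, ?_⟩
        · intro h; exact h1 (by linear_combination h)
        · intro h; exact h3 (by linear_combination h)
      · by_cases hxm1 : x = -1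
        · subst hxm1
          refine ⟨-2 + 1, ⟨-2, ?_, 1, by simp, rfl⟩, 0, by simp, by ring⟩
          push_neg
          refine ⟨?_, ?_, ?_⟩
          · intro h; exact h2 (by linear_combination -h)
          · intro h; exact h3 (by linear_combination -h)
          · intro h; exact h1 (by linear_combination -h)
        · exact ⟨x + 0, ⟨x, by push_neg; exact ⟨hx, hx1, hxm1⟩, 0, by simp, rfl⟩,
            0, by simp, by ring⟩
end
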